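/- arXiv:1206.5694 — 2 statements merged into one kernel-verified Lean document; each statement's English description precedes it below -/
import Mathlib

section
/- Let R be a U_opt-LL eDCTRS over a signature F, and let s, t be terms in T(F,V). If there is an EV-safe reduction sequence s ↪*_{U_opt(R)} t, then there exists an EV-safe reduction sequence s ↪*_{U_opt(R)} t that is EV-instantiated on T(F,V). -/
set_option maxHeartbeats 1000000

universe u

/-! ## Terms -/

inductive Term (α : Type u) : Type u where
  | var : ℕ → Term α
  | app : α → List (Term α) → Term α

namespace Term

variable {α : Type u}

/-- The list of variable occurrences of a term (left-to-right). -/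
def varList : Term α → List ℕ
  | var x => [x]
  | app _ ts => ts.attach.foldr (fun t acc => varList t.1 ++ acc) []
decreasing_by
  simp only [Term.app.sizeOf_spec]
  have := List.sizeOf_lt_of_mem t.2
  omega

/-- The list of (function symbol, number of arguments) occurrences of a term. -/
def apps : Term α → List (α × ℕ)
  | var _ => []
  | app f ts => (f, ts.length) :: ts.attach.foldr (fun t acc => apps t.1 ++ acc) []
decreasing_by
  simp only [Term.app.sizeOf_spec]
  have := List.sizeOf_lt_of_mem t.2
  omega

/-- `Var(t)`: the set of variables of a term. -/
def varFinset (t : Term α) : Finset ℕ := t.varList.toFinset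

/-- All function symbols of the term belong to the signature `F`. -/
def overSig (F : Set α) (t : Term α) : Prop := ∀ p ∈ t.apps, p.1 ∈ F

/-- `t ∈ T(F,V)`: all function symbols belong to `F` and are applied
according to their arities. -/
def inT (F : Set α) (ar : α → ℕ) (t : Term α) : Prop :=
  ∀ p ∈ t.apps, p.1 ∈ F ∧ ar p.1 = p.2

/-- A term is linear if no variable occurs twice in it. -/
def Linear (t : Term α) : Prop := t.varList.Nodup

/-- A term is ground if it contains no variable. -/
def Ground (t : Term α) : Prop := t.varList = []

/-- Applying a substitution to a term. -/
def subst (σ : ℕ → Term α) : Term α → Term α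
  | var x => σ x
  | app f ts => app f (ts.attach.map (fun t => subst σ t.1))
decreasing_by
  simp only [Term.app.sizeOf_spec]
  have := List.sizeOf_lt_of_mem t.2
  omega

def isVar : Term α → Prop
  | var _ => True
  | app _ _ => False

def root? : Term α → Option α
  | var _ => none
  | app f _ => some f

def args : Term α → List (Term α)
  | var _ => []
  | app _ ts => ts

end Term

def junkPair {α : Type u} : Term α × Term α := (Term.var 0, Term.var 0)

/-! ## Conditional rewrite rules -/

/-- An extended (oriented) conditional rewrite rule `l → r ⇐ s₁ ↠ t₁; …; s_k ↠ t_k`,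
where `conds` is the list of pairs `(sᵢ, tᵢ)`. -/
structure ERule (α : Type u) : Type u where
  lhs : Term α
  rhs : Term α
  conds : List (Term α × Term α)

namespace ERule

variable {α : Type u}

def nonLV (ρ : ERule α) : Prop := ¬ ρ.lhs.isVar
def nonRV (ρ : ERule α) : Prop := ¬ ρ.rhs.isVar

/-- `X_{j+1} = Var(l, t_1, …, t_j)` (0-based index `j`). -/
def Xset (ρ : ERule α) (j : ℕ) : Finset ℕ :=
  ρ.lhs.varFinset ∪ ((ρ.conds.take j).map (fun c => c.2.varFinset)).foldr (· ∪ ·) ∅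

/-- `Y_{j+1} = Var(r, t_{j+1}, s_{j+2}, t_{j+2}, …, s_k, t_k)` (0-based index `j`). -/
def Yset (ρ : ERule α) (j : ℕ) : Finset ℕ :=
  ρ.rhs.varFinset ∪ (ρ.conds.getD j junkPair).2.varFinset ∪
    ((ρ.conds.drop (j+1)).map (fun c => c.1.varFinset ∪ c.2.varFinset)).foldr (· ∪ ·) ∅

/-- `Z_i = X_i ∩ Y_i`. -/
def Zset (ρ : ERule α) (j : ℕ) : Finset ℕ := ρ.Xset j ∩ ρ.Yset j

/-- Determinism: `Var(sᵢ) ⊆ Var(l, t₁, …, t_{i-1})`. -/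
def Det (ρ : ERule α) : Prop :=
  ∀ j < ρ.conds.length, (ρ.conds.getD j junkPair).1.varFinset ⊆ ρ.Xset j

/-- Type 3: `Var(r) ⊆ Var(l, s₁, t₁, …, s_k, t_k)`. -/
def Type3 (ρ : ERule α) : Prop :=
  ρ.rhs.varFinset ⊆
    ρ.lhs.varFinset ∪ ((ρ.conds.map (fun c => c.1.varFinset ∪ c.2.varFinset)).foldr (· ∪ ·) ∅)

/-- Left-linearity of a rule. -/
def LL (ρ : ERule α) : Prop := ρ.lhs.Linear
/-- Right-linearity of a rule. -/
def RL (ρ : ERule α) : Prop := ρ.rhs.Linear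
/-- Non-erasingness of a rule: `Var(l) ⊆ Var(r)`. -/
def NE (ρ : ERule α) : Prop := ρ.lhs.varFinset ⊆ ρ.rhs.varFinset

/-- `EVar(l → r) = Var(r) \\ Var(l)`, the extra variables of a rule. -/
def extraVars (ρ : ERule α) : Finset ℕ := ρ.rhs.varFinset \ ρ.lhs.varFinset

/-- The inverted rule `(l → r ⇐ s₁ ↠ t₁; …; s_k ↠ t_k)⁻¹ = r → l ⇐ t_k ↠ s_k; …; t₁ ↠ s₁`. -/
def inv (ρ : ERule α) : ERule α :=
  ⟨ρ.rhs, ρ.lhs, (ρ.conds.map (fun c => (c.2, c.1))).reverse⟩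

def allVarFinset (ρ : ERule α) : Finset ℕ :=
  ρ.lhs.varFinset ∪ ρ.rhs.varFinset ∪
    ((ρ.conds.map (fun c => c.1.varFinset ∪ c.2.varFinset)).foldr (· ∪ ·) ∅)

/-- A number strictly larger than every variable of the rule; used to pick fresh variables. -/
def freshBase (ρ : ERule α) : ℕ := ρ.allVarFinset.sup id + 1

/-- All terms of the rule use only symbols of `F`. -/
def overSig (F : Set α) (ρ : ERule α) : Prop :=
  ρ.lhs.overSig F ∧ ρ.rhs.overSig F ∧ ∀ c ∈ ρ.conds, c.1.overSig F ∧ c.2.overSig F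

/-- All terms of the rule are in `T(F,V)` (symbols of `F`, arity-correct). -/
def inT (F : Set α) (ar : α → ℕ) (ρ : ERule α) : Prop :=
  ρ.lhs.inT F ar ∧ ρ.rhs.inT F ar ∧ ∀ c ∈ ρ.conds, c.1.inT F ar ∧ c.2.inT F ar

end ERule

/-! ## Reduction relations -/

/-- One-hole contexts. -/
inductive Ctx (α : Type u) : Type u where
  | hole : Ctx α
  | app : α → List (Term α) → Ctx α → List (Term α) → Ctx α

def Ctx.plug {α : Type u} : Ctx α → Term α → Term α
  | .hole, t => t
  | .app f pre c post, t => .app f (pre ++ c.plug t :: post)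

/-- The approximations `→_{(n),R}` of the reduction relation of an oriented eCTRS. -/
def RedN {α : Type u} (R : Set (ERule α)) : ℕ → Term α → Term α → Prop
  | 0 => fun _ _ => False
  | n + 1 => fun s t =>
      RedN R n s t ∨
      ∃ ρ ∈ R, ∃ C : Ctx α, ∃ σ : ℕ → Term α,
        s = C.plug (ρ.lhs.subst σ) ∧ t = C.plug (ρ.rhs.subst σ) ∧
        ∀ c ∈ ρ.conds, Relation.ReflTransGen (RedN R n) (c.1.subst σ) (c.2.subst σ)

/-- The reduction relation `→_R` of an oriented eCTRS. -/
def Red {α : Type u} (R : Set (ERule α)) (s t : Term α) : Prop := ∃ n, RedN R n s t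

/-- `→*_R`. -/
def RedStar {α : Type u} (R : Set (ERule α)) : Term α → Term α → Prop :=
  Relation.ReflTransGen (Red R)

/-- The approximations of the reduction relation of a join CTRS
(conditions interpreted as joinability). -/
def JRedN {α : Type u} (R : Set (ERule α)) : ℕ → Term α → Term α → Prop
  | 0 => fun _ _ => False
  | n + 1 => fun s t =>
      JRedN R n s t ∨
      ∃ ρ ∈ R, ∃ C : Ctx α, ∃ σ : ℕ → Term α,
        s = C.plug (ρ.lhs.subst σ) ∧ t = C.plug (ρ.rhs.subst σ) ∧
        ∀ c ∈ ρ.conds, ∃ w, Relation.ReflTransGen (JRedN R n) (c.1.subst σ) w ∧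
          Relation.ReflTransGen (JRedN R n) (c.2.subst σ) w

/-- The reduction relation of a join CTRS. -/
def JRed {α : Type u} (R : Set (ERule α)) (s t : Term α) : Prop := ∃ n, JRedN R n s t

def JRedStar {α : Type u} (R : Set (ERule α)) : Term α → Term α → Prop :=
  Relation.ReflTransGen (JRed R)

/-- The underlying unconditional system `R_u`. -/
def Ru {α : Type u} (R : Set (ERule α)) : Set (ERule α) :=
  (fun ρ : ERule α => ⟨ρ.lhs, ρ.rhs, []⟩) '' R

/-- Normal form w.r.t. a system. -/
def IsNF {α : Type u} (R : Set (ERule α)) (t : Term α) : Prop := ∀ w, ¬ Red R t w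

/-! ## Unravelings for deterministic CTRSs -/

/-- The fixed-order sequence of a finite set of variables. -/
def seqOf (s : Finset ℕ) : List ℕ := s.sort (· ≤ ·)

/-- `U(t, x⃗)`: a U symbol applied to a term followed by a sequence of variables. -/
def mkU {α : Type u} (f : α) (t : Term α) (xs : List ℕ) : Term α :=
  .app f (t :: xs.map Term.var)

/-- Generic sequential unraveling of a single deterministic rule, where `carry j` is
the variable sequence carried by the `j`-th U symbol. -/
def unravelWith {α : Type u} (carry : ℕ → List ℕ) (u : ℕ → α) (ρ : ERule α) :
    List (ERule α) :=
  (List.range (ρ.conds.length + 1)).map (fun j =>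
    ⟨ if j = 0 then ρ.lhs else mkU (u (j-1)) (ρ.conds.getD (j-1) junkPair).2 (carry (j-1)),
      if j < ρ.conds.length then mkU (u j) (ρ.conds.getD j junkPair).1 (carry j) else ρ.rhs,
      [] ⟩)

/-- Ohlebusch's unraveling `U` of a single rule (carrying `X⃗ᵢ`). -/
def unravelU {α : Type u} (u : ℕ → α) (ρ : ERule α) : List (ERule α) :=
  unravelWith (fun j => seqOf (ρ.Xset j)) u ρ

/-- The optimized unraveling `U_opt` of a single rule (carrying `Z⃗ᵢ`). -/
def unravelOpt {α : Type u} (u : ℕ → α) (ρ : ERule α) : List (ERule α) :=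
  unravelWith (fun j => seqOf (ρ.Zset j)) u ρ

/-- `U(R)`. -/
def USys {α : Type u} (u : ERule α → ℕ → α) (R : Set (ERule α)) : Set (ERule α) :=
  { q | ∃ ρ ∈ R, q ∈ unravelU (u ρ) ρ }

/-- `U_opt(R)`. -/
def UoptSys {α : Type u} (u : ERule α → ℕ → α) (R : Set (ERule α)) : Set (ERule α) :=
  { q | ∃ ρ ∈ R, q ∈ unravelOpt (u ρ) ρ }

/-- The U symbols introduced for the rules of `R`. -/
def USymbols {α : Type u} (u : ERule α → ℕ → α) (R : Set (ERule α)) : Set α :=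
  { a | ∃ ρ ∈ R, ∃ i < ρ.conds.length, a = u ρ i }

/-- Freshness of the U symbols: they do not occur in `F` and are pairwise distinct. -/
def UFresh {α : Type u} (F : Set α) (u : ERule α → ℕ → α) (R : Set (ERule α)) : Prop :=
  (∀ ρ ∈ R, ∀ i < ρ.conds.length, u ρ i ∉ F) ∧
  (∀ ρ ∈ R, ∀ ρ' ∈ R, ∀ i < ρ.conds.length, ∀ j < ρ'.conds.length,
      u ρ i = u ρ' j → ρ = ρ' ∧ i = j)

/-! ## Positions, parallel reduction, EV-safe reduction -/

abbrev Pos := List ℕ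

/-- Subterm at a position. -/
def Term.sub? {α : Type u} : Pos → Term α → Option (Term α)
  | [], t => some t
  | _ :: _, .var _ => none
  | i :: p, .app _ ts => (ts[i]?).bind (Term.sub? p)

/-- Replacing the subterm at a position by `w`. -/
def Term.replaceAt {α : Type u} (w : Term α) : Pos → Term α → Term α
  | [], _ => w
  | _ :: _, .var x => .var x
  | i :: p, .app f ts =>
      .app f (ts.mapIdx (fun j s => if j = i then Term.replaceAt w p s else s))

/-- `Pos_F(t)`: non-variable positions of `t`. -/
def PosF {α : Type u} (t : Term α) : Set Pos :=
  { p | ∃ f ts, Term.sub? p t = some (Term.app f ts) }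

/-- `Pos_V(t)`: variable positions of `t`. -/
def PosV {α : Type u} (t : Term α) : Set Pos :=
  { p | ∃ x, Term.sub? p t = some (Term.var x) }

/-- One rewrite step of an eTRS at position `p`. -/
def RedAt {α : Type u} (R : Set (ERule α)) (p : Pos) (s t : Term α) : Prop :=
  ∃ ρ ∈ R, ρ.conds = [] ∧ ∃ σ : ℕ → Term α,
    Term.sub? p s = some (ρ.lhs.subst σ) ∧ t = Term.replaceAt (ρ.rhs.subst σ) p s

/-- Two positions are parallel. -/
def ParallelPos (p q : Pos) : Prop := ¬ p <+: q ∧ ¬ q <+: p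

/-- A sequence of single steps at the listed positions. -/
inductive RedSeqAt {α : Type u} (R : Set (ERule α)) : List Pos → Term α → Term α → Prop
  | nil (t : Term α) : RedSeqAt R [] t t
  | cons {ps s s' t} (p : Pos) : RedAt R p s s' → RedSeqAt R ps s' t →
      RedSeqAt R (p :: ps) s t

/-- One parallel rewrite step contracting the (pairwise parallel) positions in `P`. -/
def ParStep {α : Type u} (R : Set (ERule α)) (P : List Pos) (s t : Term α) : Prop :=
  P.Pairwise ParallelPos ∧ RedSeqAt R P s t

/-- The parallel reduction `⇉_R`. -/
def ParRed {α : Type u} (R : Set (ERule α)) (s t : Term α) : Prop :=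
  ∃ P, ParStep R P s t

/-- Parallel reduction where every contracted position is at or below a position of `Q`. -/
def ParRedBelow {α : Type u} (R : Set (ERule α)) (Q : Set Pos) (s t : Term α) : Prop :=
  ∃ P, ParStep R P s t ∧ ∀ p ∈ P, ∃ q ∈ Q, q <+: p

/-- `n`-fold composition of a relation. -/
def NFold {β : Type*} (r : β → β → Prop) : ℕ → β → β → Prop
  | 0 => Eq
  | n + 1 => fun a c => ∃ b, r a b ∧ NFold r n b c

/-- The update of the set of basic positions w.r.t. extra variables after a rewrite step
at position `p` with rule `l → r`. -/
def nextB {α : Type u} (B : Set Pos) (p : Pos) (l r : Term α) : Set Pos :=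
  { q | q ∈ B ∧ ¬ p <+: q }
  ∪ { q | ∃ q' ∈ PosF r, q = p ++ q' }
  ∪ { q | ∃ pv p' q', pv ∈ PosV l ∧ Term.sub? pv l = Term.sub? p' r ∧
        (p ++ pv ++ q') ∈ B ∧ q = p ++ p' ++ q' }

/-- Reduction sequences of an eTRS based on a set `B` of positions w.r.t. extra
variables, where additionally every term substituted for an extra variable of the
applied rule satisfies `T` (EV-instantiation on `T`). -/
inductive EVSeq {α : Type u} (R : Set (ERule α)) (T : Term α → Prop) :
    Set Pos → Term α → Term α → Prop
  | refl (B : Set Pos) (t : Term α) : EVSeq R T B t t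
  | step {B : Set Pos} {s s' t : Term α} (p : Pos) (ρ : ERule α) (σ : ℕ → Term α) :
      ρ ∈ R → ρ.conds = [] →
      Term.sub? p s = some (ρ.lhs.subst σ) →
      s' = Term.replaceAt (ρ.rhs.subst σ) p s →
      p ∈ B →
      (∀ x ∈ ρ.extraVars, T (σ x)) →
      EVSeq R T (nextB B p ρ.lhs ρ.rhs) s' t →
      EVSeq R T B s t

/-- An EV-safe reduction sequence `s ↪*_R t`, EV-instantiated on `T`. -/
def EVSafeI {α : Type u} (R : Set (ERule α)) (T : Term α → Prop) (s t : Term α) : Prop :=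
  EVSeq R T (PosF s) s t

/-- An EV-safe reduction sequence `s ↪*_R t`. -/
def EVSafe {α : Type u} (R : Set (ERule α)) (s t : Term α) : Prop :=
  EVSeq R (fun _ => True) (PosF s) s t

/-! ## Tree homomorphisms -/

/-- Applying the tree homomorphism determined by `h` to a term:
`φ(f(t₁, …, t_n)) = h(f){xᵢ ↦ φ(tᵢ)}` (the formal variable `xᵢ` is the variable `i - 1`). -/
def applyHom {α : Type u} (h : α → Term α) : Term α → Term α
  | .var x => .var x
  | .app f ts =>
      Term.subst (fun i => (ts.attach.map (fun s => applyHom h s.1)).getD i (Term.var i)) (h f)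
decreasing_by
  simp only [Term.app.sizeOf_spec]
  have := List.sizeOf_lt_of_mem s.2
  omega

/-- The image of a rule under a tree homomorphism. -/
def homRule {α : Type u} (h : α → Term α) (ρ : ERule α) : ERule α :=
  ⟨applyHom h ρ.lhs, applyHom h ρ.rhs,
    ρ.conds.map (fun c => (applyHom h c.1, applyHom h c.2))⟩

/-- The image of an eCTRS under a tree homomorphism. -/
def homSys {α : Type u} (h : α → Term α) (R : Set (ERule α)) : Set (ERule α) :=
  homRule h '' R

/-- `h` determines a tree homomorphism from `T(G₁,V)` to `T(G₂,V)` (w.r.t. arity `ar`):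
for `f ∈ G₁` of arity `n`, `h f` is a term over `G₂` with variables among `x₁, …, x_n`. -/
def TreeHom {α : Type u} (ar : α → ℕ) (G₁ G₂ : Set α) (h : α → Term α) : Prop :=
  ∀ f ∈ G₁, (h f).overSig G₂ ∧ ∀ x ∈ (h f).varList, x < ar f

/-- `F`-identical tree homomorphism. -/
def FIdentical {α : Type u} (ar : α → ℕ) (F : Set α) (h : α → Term α) : Prop :=
  ∀ f ∈ F, h f = Term.app f ((List.range (ar f)).map Term.var)

/-- Non-erasing tree homomorphism (on the signature `G`). -/
def HomNonErasing {α : Type u} (ar : α → ℕ) (G : Set α) (h : α → Term α) : Prop :=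
  ∀ f ∈ G, (h f).varFinset = Finset.range (ar f)

/-- The homomorphism is EV-preserving for the eTRS `S`. -/
def EVPreserving {α : Type u} (h : α → Term α) (S : Set (ERule α)) : Prop :=
  ∀ ρ ∈ S, (homRule h ρ).extraVars = ρ.extraVars

/-! ## Unravelings for join and normal CTRSs, and `Norm` -/

/-- Marchiori-style unraveling `U_J` of a join conditional rule. -/
def unravelJ {α : Type u} (uj : ERule α → α) (ρ : ERule α) : List (ERule α) :=
  if ρ.conds.isEmpty then [ρ]
  else
    [ ⟨ρ.lhs,
        Term.app (uj ρ) ((ρ.conds.foldr (fun c acc => c.1 :: c.2 :: acc) []) ++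
          (seqOf ρ.lhs.varFinset).map Term.var), []⟩,
      ⟨Term.app (uj ρ)
          (((List.range ρ.conds.length).foldr
              (fun j acc => Term.var (ρ.freshBase + j) :: Term.var (ρ.freshBase + j) :: acc) []) ++
            (seqOf ρ.lhs.varFinset).map Term.var),
        ρ.rhs, []⟩ ]

def UJSys {α : Type u} (uj : ERule α → α) (R : Set (ERule α)) : Set (ERule α) :=
  { q | ∃ ρ ∈ R, q ∈ unravelJ uj ρ }

/-- Unraveling `U_N` of a normal conditional rule. -/
def unravelN {α : Type u} (un : ERule α → α) (ρ : ERule α) : List (ERule α) :=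
  if ρ.conds.isEmpty then [ρ]
  else
    [ ⟨ρ.lhs,
        Term.app (un ρ) (ρ.conds.map Prod.fst ++ (seqOf ρ.lhs.varFinset).map Term.var), []⟩,
      ⟨Term.app (un ρ) (ρ.conds.map Prod.snd ++ (seqOf ρ.lhs.varFinset).map Term.var),
        ρ.rhs, []⟩ ]

def UNSys {α : Type u} (un : ERule α → α) (R : Set (ERule α)) : Set (ERule α) :=
  { q | ∃ ρ ∈ R, q ∈ unravelN un ρ }

/-- `Norm` on rules: `l → r ⇐ eq(s₁,t₁) ↠ eq(⊤,⊤); …; eq(s_k,t_k) ↠ eq(⊤,⊤)`. -/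
def normRule {α : Type u} (eqS topS : α) (ρ : ERule α) : ERule α :=
  ⟨ρ.lhs, ρ.rhs,
    ρ.conds.map (fun c =>
      (Term.app eqS [c.1, c.2], Term.app eqS [Term.app topS [], Term.app topS []]))⟩

/-- `Norm(R) = {eq(x,x) → eq(⊤,⊤)} ∪ {Norm(ρ) | ρ ∈ R}`. -/
def NormSys {α : Type u} (eqS topS : α) (R : Set (ERule α)) : Set (ERule α) :=
  insert
    ⟨Term.app eqS [Term.var 0, Term.var 0],
      Term.app eqS [Term.app topS [], Term.app topS []], []⟩
    (normRule eqS topS '' R)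

/-- A normal CTRS: a deterministic, non-LV CTRS all of whose condition right-hand
sides are ground normal forms w.r.t. `R_u`. -/
def NormalCTRS {α : Type u} (R : Set (ERule α)) : Prop :=
  ∀ ρ ∈ R, ρ.Det ∧ ρ.nonLV ∧ ∀ c ∈ ρ.conds, c.2.Ground ∧ IsNF (Ru R) c.2

/-! ## Auxiliary infrastructure for Statement 10 -/

section AuxStatement10

variable {α : Type u}

private theorem Term.indOn {motive : Term α → Prop}
    (hv : ∀ x, motive (.var x))
    (ha : ∀ f ts, (∀ τ ∈ ts, motive τ) → motive (.app f ts)) :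
    ∀ t : Term α, motive t
  | .var x => hv x
  | .app f ts => ha f ts (fun τ h => Term.indOn hv ha τ)
decreasing_by
  simp only [Term.app.sizeOf_spec]
  have := List.sizeOf_lt_of_mem h
  omega

private theorem List.mem_of_getElem?' {β : Type*} {l : List β} {i : ℕ} {a : β}
    (h : l[i]? = some a) : a ∈ l := by
  obtain ⟨hlt, rfl⟩ := List.getElem?_eq_some_iff.mp h
  exact List.getElem_mem hlt

@[simp] private theorem Term.subst_var (σ : ℕ → Term α) (x : ℕ) :
    (Term.var x : Term α).subst σ = σ x := by
  simp [Term.subst]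

@[simp] private theorem Term.subst_app (σ : ℕ → Term α) (f : α) (ts : List (Term α)) :
    (Term.app f ts).subst σ = .app f (ts.map (·.subst σ)) := by
  rw [Term.subst]
  congr 1
  rw [← List.attach_map_val (l := ts) (f := (·.subst σ))]

private theorem foldr_append_eq_flatten {β γ : Type*} (l : List β) (k : β → List γ) :
    l.foldr (fun a acc => k a ++ acc) [] = (l.map k).flatten := by
  induction l <;> simp [*]

@[simp] private theorem Term.varList_var (x : ℕ) :
    (Term.var x : Term α).varList = [x] := by simp [Term.varList]

@[simp] private theorem Term.varList_app (f : α) (ts : List (Term α)) :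
    (Term.app f ts).varList = ts.flatMap Term.varList := by
  rw [Term.varList, foldr_append_eq_flatten, List.flatMap_def]
  congr 1
  rw [← List.attach_map_val (l := ts) (f := Term.varList)]

@[simp] private theorem Term.apps_var (x : ℕ) :
    (Term.var x : Term α).apps = [] := by simp [Term.apps]

@[simp] private theorem Term.apps_app (f : α) (ts : List (Term α)) :
    (Term.app f ts).apps = (f, ts.length) :: ts.flatMap Term.apps := by
  rw [Term.apps, foldr_append_eq_flatten, List.flatMap_def]
  congr 2
  rw [← List.attach_map_val (l := ts) (f := Term.apps)]

@[simp] private theorem Term.sub?_nil (t : Term α) : Term.sub? [] t = some t := rfl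
@[simp] private theorem Term.sub?_cons_var (i : ℕ) (p : Pos) (x : ℕ) :
    Term.sub? (i :: p) (Term.var x : Term α) = none := rfl
@[simp] private theorem Term.sub?_cons_app (i : ℕ) (p : Pos) (f : α) (ts : List (Term α)) :
    Term.sub? (i :: p) (Term.app f ts) = (ts[i]?).bind (Term.sub? p) := rfl

private theorem Term.mem_varList_iff {t : Term α} {x : ℕ} :
    x ∈ t.varList ↔ ∃ q, Term.sub? q t = some (.var x) := by
  induction t using Term.indOn with
  | hv y =>
    simp only [Term.varList_var, List.mem_singleton]
    constructor
    · rintro rfl; exact ⟨[], rfl⟩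
    · rintro ⟨q, hq⟩
      cases q with
      | nil => simpa using hq.symm
      | cons i p => simp at hq
  | ha f ts ih =>
    simp only [Term.varList_app, List.mem_flatMap]
    constructor
    · rintro ⟨τ, hτ, hx⟩
      obtain ⟨q, hq⟩ := (ih τ hτ).1 hx
      obtain ⟨i, hi⟩ := List.mem_iff_getElem?.1 hτ
      exact ⟨i :: q, by simp [hi, hq]⟩
    · rintro ⟨q, hq⟩
      cases q with
      | nil => simp at hq
      | cons i p =>
        simp only [Term.sub?_cons_app] at hq
        obtain ⟨τ, hτ, hsub⟩ := Option.bind_eq_some_iff.1 hq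
        exact ⟨τ, List.mem_of_getElem?' hτ, (ih τ (List.mem_of_getElem?' hτ)).2 ⟨p, hsub⟩⟩

private theorem Term.mem_apps_iff {t : Term α} {z : α × ℕ} :
    z ∈ t.apps ↔ ∃ q f ts, Term.sub? q t = some (.app f ts) ∧ z = (f, ts.length) := by
  induction t using Term.indOn with
  | hv y =>
    simp only [Term.apps_var, List.not_mem_nil, false_iff]
    rintro ⟨q, f, ts, hq, rfl⟩
    cases q with
    | nil => simp at hq
    | cons i p => simp at hq
  | ha f ts ih =>
    simp only [Term.apps_app, List.mem_cons, List.mem_flatMap]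
    constructor
    · rintro (rfl | ⟨τ, hτ, hz⟩)
      · exact ⟨[], f, ts, rfl, rfl⟩
      · obtain ⟨q, g, us, hq, rfl⟩ := (ih τ hτ).1 hz
        obtain ⟨i, hi⟩ := List.mem_iff_getElem?.1 hτ
        exact ⟨i :: q, g, us, by simp [hi, hq], rfl⟩
    · rintro ⟨q, g, us, hq, rfl⟩
      cases q with
      | nil =>
        simp only [Term.sub?_nil, Option.some.injEq] at hq
        cases hq; exact Or.inl rfl
      | cons i p =>
        simp only [Term.sub?_cons_app] at hq
        obtain ⟨τ, hτ, hsub⟩ := Option.bind_eq_some_iff.1 hq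
        exact Or.inr ⟨τ, List.mem_of_getElem?' hτ,
          (ih τ (List.mem_of_getElem?' hτ)).2 ⟨p, g, us, hsub, rfl⟩⟩

private theorem Term.overSig_iff {F : Set α} {t : Term α} :
    t.overSig F ↔ ∀ q f ts, Term.sub? q t = some (.app f ts) → f ∈ F := by
  constructor
  · intro h q f ts hq
    exact h (f, ts.length) (Term.mem_apps_iff.2 ⟨q, f, ts, hq, rfl⟩)
  · intro h z hz
    obtain ⟨q, f, ts, hq, rfl⟩ := Term.mem_apps_iff.1 hz
    exact h q f ts hq

private theorem Term.sub?_append (p q : Pos) (t : Term α) :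
    Term.sub? (p ++ q) t = (Term.sub? p t).bind (Term.sub? q) := by
  induction p generalizing t with
  | nil => simp
  | cons i p ih =>
    cases t with
    | var x => simp
    | app f ts =>
      simp only [List.cons_append, Term.sub?_cons_app]
      cases ts[i]? with
      | none => simp
      | some τ => simp [ih]

private theorem Term.sub?_some_append {p q : Pos} {t w : Term α}
    (h : Term.sub? p t = some w) : Term.sub? (p ++ q) t = Term.sub? q w := by
  rw [Term.sub?_append, h]; rfl

end AuxStatement10
section AuxStatement10B

variable {α : Type u}

/-- The "node" (variable, or head symbol with arity) of a term. -/
private def nodeOf : Term α → ℕ ⊕ α × ℕ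
  | .var x => .inl x
  | .app f ts => .inr (f, ts.length)

/-- The node of the subterm of `t` at position `q`, if any. -/
private def node? (q : Pos) (t : Term α) : Option (ℕ ⊕ α × ℕ) :=
  (Term.sub? q t).map nodeOf

private theorem node?_isSome {q : Pos} {t : Term α} (h : node? q t ≠ none) :
    ∃ w, Term.sub? q t = some w := by
  unfold node? at h
  cases hs : Term.sub? q t with
  | none => rw [hs] at h; simp at h
  | some w => exact ⟨w, rfl⟩

private theorem node?_some_append {p q : Pos} {t w : Term α}
    (h : Term.sub? p t = some w) : node? (p ++ q) t = node? q w := by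
  unfold node?; rw [Term.sub?_some_append h]

private theorem Term.sub?_subst {q : Pos} {t w : Term α} (σ : ℕ → Term α)
    (h : Term.sub? q t = some w) : Term.sub? q (t.subst σ) = some (w.subst σ) := by
  induction q generalizing t with
  | nil => simp_all
  | cons i p ih =>
    cases t with
    | var x => simp at h
    | app f ts =>
      simp only [Term.sub?_cons_app] at h
      obtain ⟨τ, hτ, hsub⟩ := Option.bind_eq_some_iff.1 h
      simp only [Term.subst_app, Term.sub?_cons_app, List.getElem?_map, hτ,
        Option.map_some, Option.bind_some]
      exact ih hsub

private theorem Term.sub?_subst_var {e₀ e' : Pos} {r : Term α} {x : ℕ} (σ : ℕ → Term α)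
    (h : Term.sub? e₀ r = some (.var x)) :
    Term.sub? (e₀ ++ e') (r.subst σ) = Term.sub? e' (σ x) := by
  have := Term.sub?_subst σ h
  rw [Term.sub?_some_append (by simpa using this)]

private theorem node?_subst_var {e₀ e' : Pos} {r : Term α} {x : ℕ} (σ : ℕ → Term α)
    (h : Term.sub? e₀ r = some (.var x)) :
    node? (e₀ ++ e') (r.subst σ) = node? e' (σ x) := by
  unfold node?; rw [Term.sub?_subst_var σ h]

private theorem node?_subst_app {e : Pos} {r : Term α} {f : α} {ts : List (Term α)}
    (σ : ℕ → Term α) (h : Term.sub? e r = some (.app f ts)) :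
    node? e (r.subst σ) = some (.inr (f, ts.length)) := by
  unfold node?
  rw [Term.sub?_subst σ h]
  simp [nodeOf]

/-- Trichotomy: a position in an instance of `r` is a non-variable position of `r`,
or lies below a variable position of `r`, or is invalid in every instance. -/
private theorem pos_trichotomy (e : Pos) (r : Term α) :
    (∃ f ts, Term.sub? e r = some (.app f ts)) ∨
    (∃ e₀ x e', e = e₀ ++ e' ∧ Term.sub? e₀ r = some (.var x)) ∨
    (∀ σ : ℕ → Term α, Term.sub? e (r.subst σ) = none) := by
  induction e generalizing r with
  | nil =>
    cases r with
    | var x => exact Or.inr (Or.inl ⟨[], x, [], rfl, rfl⟩)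
    | app f ts => exact Or.inl ⟨f, ts, rfl⟩
  | cons i e ih =>
    cases r with
    | var x => exact Or.inr (Or.inl ⟨[], x, i :: e, rfl, rfl⟩)
    | app f ts =>
      cases hτ : ts[i]? with
      | none =>
        refine Or.inr (Or.inr fun σ => ?_)
        have : (ts.map (·.subst σ))[i]? = none := by
          simp only [List.getElem?_map, hτ, Option.map_none]
        simp [this]
      | some τ =>
        rcases ih τ with h | ⟨e₀, x, e', he, h⟩ | h
        · exact Or.inl (by simpa [hτ] using h)
        · exact Or.inr (Or.inl ⟨i :: e₀, x, e', by simp [he], by simpa [hτ] using h⟩)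
        · refine Or.inr (Or.inr fun σ => ?_)
          simp only [Term.subst_app, Term.sub?_cons_app, List.getElem?_map, hτ,
            Option.map_some, Option.bind_some]
          exact h σ

@[simp] private theorem Term.replaceAt_nil (w t : Term α) :
    Term.replaceAt w [] t = w := rfl
@[simp] private theorem Term.replaceAt_cons_var (w : Term α) (i : ℕ) (p : Pos) (x : ℕ) :
    Term.replaceAt w (i :: p) (Term.var x : Term α) = .var x := rfl
@[simp] private theorem Term.replaceAt_cons_app (w : Term α) (i : ℕ) (p : Pos) (f : α)
    (ts : List (Term α)) :
    Term.replaceAt w (i :: p) (Term.app f ts) =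
      .app f (ts.mapIdx (fun j s => if j = i then Term.replaceAt w p s else s)) := rfl

private theorem node?_replaceAt_not_prefix {p q : Pos} (w : Term α) (s : Term α)
    (h : ¬ p <+: q) : node? q (Term.replaceAt w p s) = node? q s := by
  induction p generalizing q s with
  | nil => exact absurd (List.nil_prefix) h
  | cons i p ih =>
    cases s with
    | var x => simp
    | app f ts =>
      cases q with
      | nil => simp [node?, nodeOf]
      | cons j q' =>
        simp only [Term.replaceAt_cons_app, node?, Term.sub?_cons_app, List.getElem?_mapIdx]
        cases hτ : ts[j]? with
        | none => simp
        | some τ =>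
          simp only [Option.map_some, Option.bind_some]
          by_cases hji : j = i
          · subst hji
            have hp : ¬ p <+: q' := fun hc => h (by simpa [List.cons_prefix_cons] using hc)
            simp only [if_pos rfl]
            exact ih τ hp
          · simp [hji]

private theorem Term.sub?_replaceAt_append {p : Pos} {s v : Term α} (w : Term α) (e : Pos)
    (h : Term.sub? p s = some v) :
    Term.sub? (p ++ e) (Term.replaceAt w p s) = Term.sub? e w := by
  induction p generalizing s with
  | nil => simp
  | cons i p ih =>
    cases s with
    | var x => simp at h
    | app f ts =>
      simp only [Term.sub?_cons_app] at h
      obtain ⟨τ, hτ, hsub⟩ := Option.bind_eq_some_iff.1 h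
      simp only [Term.replaceAt_cons_app, List.cons_append, Term.sub?_cons_app,
        List.getElem?_mapIdx, hτ, Option.map_some, Option.bind_some, if_pos rfl]
      exact ih hsub

private theorem node?_replaceAt_append {p : Pos} {s v : Term α} (w : Term α) (e : Pos)
    (h : Term.sub? p s = some v) :
    node? (p ++ e) (Term.replaceAt w p s) = node? e w := by
  unfold node?; rw [Term.sub?_replaceAt_append w e h]

/-- Extensionality: terms with the same nodes at all positions are equal. -/
private theorem Term.node_ext {s t : Term α} (h : ∀ q, node? q s = node? q t) : s = t := by
  induction s using Term.indOn generalizing t with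
  | hv x =>
    have h0 := h []
    cases t with
    | var y => simpa [node?, nodeOf] using h0
    | app g us => simp [node?, nodeOf] at h0
  | ha f ts ih =>
    have h0 := h []
    cases t with
    | var y => simp [node?, nodeOf] at h0
    | app g us =>
      simp only [node?, Term.sub?_nil, Option.map_some, nodeOf, Option.some.injEq,
        Sum.inr.injEq, Prod.mk.injEq] at h0
      obtain ⟨rfl, hlen⟩ := h0
      congr 1
      refine List.ext_getElem hlen fun i hi hi' => ?_
      refine ih _ (List.getElem_mem hi) fun q => ?_
      have := h (i :: q)
      simpa [node?, List.getElem?_eq_getElem, hi, hi'] using this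

private theorem Term.subst_congr {t : Term α} {σ σ' : ℕ → Term α}
    (h : ∀ x ∈ t.varList, σ x = σ' x) : t.subst σ = t.subst σ' := by
  induction t using Term.indOn with
  | hv x => simpa using h x (by simp)
  | ha f ts ih =>
    simp only [Term.subst_app]
    congr 1
    refine List.map_congr_left fun τ hτ => ?_
    refine ih τ hτ fun x hx => h x ?_
    simp only [Term.varList_app, List.mem_flatMap]
    exact ⟨τ, hτ, hx⟩

end AuxStatement10B
section AuxStatement10C

variable {α : Type u}

private theorem flatMap_nodup_disjoint {β : Type*} {g : β → List ℕ} :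
    ∀ {ts : List β} {i j : ℕ} {a b : β} {x : ℕ}, (ts.flatMap g).Nodup →
      ts[i]? = some a → ts[j]? = some b → i ≠ j → x ∈ g a → x ∈ g b → False := by
  intro ts
  induction ts with
  | nil => intro i j a b x _ hi; simp at hi
  | cons c rest ih =>
    intro i j a b x hnd hi hj hij hxa hxb
    rw [List.flatMap_cons, List.nodup_append'] at hnd
    obtain ⟨h1, h2, hdisj⟩ := hnd
    match i, j with
    | 0, 0 => exact hij rfl
    | 0, j+1 =>
      simp only [List.getElem?_cons_zero, Option.some.injEq] at hi
      subst hi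
      simp only [List.getElem?_cons_succ] at hj
      exact hdisj hxa (List.mem_flatMap.2 ⟨b, List.mem_of_getElem?' hj, hxb⟩)
    | i+1, 0 =>
      simp only [List.getElem?_cons_zero, Option.some.injEq] at hj
      subst hj
      simp only [List.getElem?_cons_succ] at hi
      exact hdisj hxb (List.mem_flatMap.2 ⟨a, List.mem_of_getElem?' hi, hxa⟩)
    | i+1, j+1 =>
      simp only [List.getElem?_cons_succ] at hi hj
      exact ih h2 hi hj (fun hc => hij (by omega)) hxa hxb

private theorem varList_sublist_of_mem {ts : List (Term α)} {τ : Term α} (h : τ ∈ ts) :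
    τ.varList.Sublist (ts.flatMap Term.varList) := by
  rw [List.flatMap_def]
  exact List.sublist_flatten_of_mem (List.mem_map.2 ⟨τ, h, rfl⟩)

/-- In a linear term, each variable has a unique position. -/
private theorem linear_var_pos_unique {t : Term α} :
    ∀ {q₁ q₂ : Pos} {x : ℕ}, t.varList.Nodup →
      Term.sub? q₁ t = some (.var x) → Term.sub? q₂ t = some (.var x) → q₁ = q₂ := by
  induction t using Term.indOn with
  | hv y =>
    intro q₁ q₂ x _ h1 h2
    cases q₁ with
    | nil =>
      cases q₂ with
      | nil => rfl
      | cons j q => simp at h2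
    | cons i q => simp at h1
  | ha f ts ih =>
    intro q₁ q₂ x hnd h1 h2
    cases q₁ with
    | nil => simp at h1
    | cons i q₁' =>
      cases q₂ with
      | nil => simp at h2
      | cons j q₂' =>
        simp only [Term.sub?_cons_app] at h1 h2
        obtain ⟨a, ha', hsa⟩ := Option.bind_eq_some_iff.1 h1
        obtain ⟨b, hb', hsb⟩ := Option.bind_eq_some_iff.1 h2
        rw [Term.varList_app] at hnd
        by_cases hij : i = j
        · subst hij
          rw [ha'] at hb'
          cases hb'
          have hmem : a ∈ ts := List.mem_of_getElem?' ha'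
          have : q₁' = q₂' :=
            ih a hmem (hnd.sublist (varList_sublist_of_mem hmem)) hsa hsb
          rw [this]
        · exact absurd (flatMap_nodup_disjoint hnd ha' hb' hij
            (Term.mem_varList_iff.2 ⟨q₁', hsa⟩) (Term.mem_varList_iff.2 ⟨q₂', hsb⟩)) not_false

/-- Prefix-closedness of a set of positions. -/
private def PCl (N : Set Pos) : Prop := ∀ q₁ q₂ : Pos, q₁ <+: q₂ → q₂ ∈ N → q₁ ∈ N

private theorem prefix_total {l₁ l₂ l : Pos} (h1 : l₁ <+: l) (h2 : l₂ <+: l) :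
    l₁ <+: l₂ ∨ l₂ <+: l₁ := by
  rcases le_total l₁.length l₂.length with h | h
  · exact Or.inl (List.prefix_of_prefix_length_le h1 h2 h)
  · exact Or.inr (List.prefix_of_prefix_length_le h2 h1 h)

private theorem prefix_append_cases {q p u : Pos} (h : q <+: p ++ u) :
    q <+: p ∨ ∃ u', q = p ++ u' ∧ u' <+: u := by
  rcases prefix_total h (List.prefix_append p u) with h' | h'
  · exact Or.inl h'
  · obtain ⟨u', rfl⟩ := h'
    refine Or.inr ⟨u', rfl, ?_⟩
    exact (List.prefix_append_right_inj p).1 h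

/-- If a prefix of a position of `t` exists, it is a position of `t`; a proper prefix of
any position is a non-variable position. -/
private theorem sub?_of_prefix {t w : Term α} {q q' : Pos} (h : Term.sub? q t = some w)
    (hp : q' <+: q) : ∃ w', Term.sub? q' t = some w' := by
  obtain ⟨rest, rfl⟩ := hp
  rw [Term.sub?_append] at h
  cases hs : Term.sub? q' t with
  | none => rw [hs] at h; simp at h
  | some w' => exact ⟨w', rfl⟩

private theorem sub?_app_of_proper_prefix {t w : Term α} {q q' : Pos}
    (h : Term.sub? q t = some w) (hp : q' <+: q) (hne : q' ≠ q) :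
    ∃ f ts, Term.sub? q' t = some (.app f ts) := by
  obtain ⟨rest, rfl⟩ := hp
  have hrest : rest ≠ [] := by rintro rfl; simp at hne
  rw [Term.sub?_append] at h
  cases hs : Term.sub? q' t with
  | none => rw [hs] at h; simp at h
  | some w' =>
    rw [hs] at h
    simp only [Option.bind_some] at h
    cases w' with
    | var x =>
      cases rest with
      | nil => exact absurd rfl hrest
      | cons i r => simp at h
    | app f ts => exact ⟨f, ts, rfl⟩

/-- Existence of a "cleaned" version of a term: over `F`, agreeing with the original
at all nodes in a prefix-closed set `N` whose app-nodes all carry `F`-symbols. -/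
private theorem exists_clean (F : Set α) :
    ∀ (w : Term α) (N : Set Pos), PCl N →
      (∀ q ∈ N, ∀ f ts, Term.sub? q w = some (.app f ts) → f ∈ F) →
      ∃ w' : Term α, w'.overSig F ∧ ∀ q ∈ N, node? q w' = node? q w := by
  intro w
  induction w using Term.indOn with
  | hv x =>
    intro N _ _
    exact ⟨.var x, by simp [Term.overSig], fun q _ => rfl⟩
  | ha f ts ih =>
    intro N hpc hhead
    by_cases h0 : ([] : Pos) ∈ N
    · have hf : f ∈ F := hhead [] h0 f ts rfl
      have hch : ∀ i : Fin ts.length, ∃ w' : Term α, w'.overSig F ∧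
          ∀ q ∈ {e : Pos | (i : ℕ) :: e ∈ N}, node? q w' = node? q ts[i] := by
        intro i
        refine ih ts[i] (List.getElem_mem i.2) _ ?_ ?_
        · intro q₁ q₂ hq h2
          exact hpc ((i : ℕ) :: q₁) ((i : ℕ) :: q₂) (List.cons_prefix_cons.2 ⟨rfl, hq⟩) h2
        · intro q hq g us hsub
          refine hhead ((i : ℕ) :: q) hq g us ?_
          simp only [Term.sub?_cons_app, List.getElem?_eq_getElem i.2, Option.bind_some]
          exact hsub
      choose g hg1 hg2 using hch
      refine ⟨.app f (List.ofFn g), ?_, ?_⟩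
      · rw [Term.overSig_iff]
        intro q g' us hsub
        cases q with
        | nil =>
          simp only [Term.sub?_nil, Option.some.injEq] at hsub
          cases hsub; exact hf
        | cons i p =>
          simp only [Term.sub?_cons_app] at hsub
          obtain ⟨τ, hτ, hs⟩ := Option.bind_eq_some_iff.1 hsub
          have hτm : τ ∈ List.ofFn g := List.mem_of_getElem?' hτ
          obtain ⟨j, rfl⟩ := (List.mem_ofFn (f := g) (a := τ)).1 hτm
          exact (Term.overSig_iff.1 (hg1 j)) p g' us hs
      · intro q hq
        cases q with
        | nil => simp [node?, nodeOf, List.length_ofFn]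
        | cons i p =>
          simp only [node?, Term.sub?_cons_app]
          by_cases hi : i < ts.length
          · have h1 : (List.ofFn g)[i]? = some (g ⟨i, hi⟩) := by
              simp [List.getElem?_ofFn, hi]
            have h2 : ts[i]? = some ts[i] := List.getElem?_eq_getElem hi
            rw [h1, h2]
            simp only [Option.bind_some]
            have := hg2 ⟨i, hi⟩ p hq
            simpa [node?] using this
          · have h1 : (List.ofFn g)[i]? = none := by
              rw [List.getElem?_ofFn]
              exact dif_neg hi
            have h2 : ts[i]? = none := by
              rw [List.getElem?_eq_none_iff]
              omega
            rw [h1, h2]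
    · refine ⟨.var 0, by simp [Term.overSig], fun q hq => ?_⟩
      exact absurd (hpc [] q (List.nil_prefix) hq) h0
  
end AuxStatement10C
section AuxStatement10D

variable {α : Type u}

/-- Matching a linear pattern `l` against a term that has the same nodes as `l.subst σ`
at all non-variable positions of `l`. -/
private theorem match_linear :
    ∀ (l : Term α), l.varList.Nodup → ∀ (w' : Term α) (σ : ℕ → Term α),
      (∀ q₀ f ts, Term.sub? q₀ l = some (.app f ts) →
        node? q₀ w' = node? q₀ (l.subst σ)) →
      ∃ σ' : ℕ → Term α, w' = l.subst σ' ∧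
        ∀ x qx, Term.sub? qx l = some (.var x) → Term.sub? qx w' = some (σ' x) := by
  intro l
  induction l using Term.indOn with
  | hv y =>
    intro _ w' σ _
    refine ⟨fun _ => w', by simp, ?_⟩
    intro x qx hqx
    cases qx with
    | nil =>
      simp only [Term.sub?_nil, Option.some.injEq, Term.var.injEq] at hqx
      subst hqx; simp
    | cons i p => simp at hqx
  | ha f ts ih =>
    intro hnd w' σ h
    rw [Term.varList_app] at hnd
    have h0 := h [] f ts rfl
    simp only [node?, Term.sub?_nil, Option.map_some, Term.subst_app, nodeOf,
      List.length_map] at h0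
    cases w' with
    | var y => simp [nodeOf] at h0
    | app g ts' =>
      simp only [nodeOf, Option.some.injEq, Sum.inr.injEq, Prod.mk.injEq] at h0
      obtain ⟨rfl, hlen⟩ := h0
      have hch : ∀ i : Fin ts.length, ∃ σ'' : ℕ → Term α,
          ts'[(i : ℕ)]'(by omega) = ts[(i : ℕ)].subst σ'' ∧
          ∀ x qx, Term.sub? qx ts[(i : ℕ)] = some (.var x) →
            Term.sub? qx (ts'[(i : ℕ)]'(by omega)) = some (σ'' x) := by
      
        intro i
        refine ih ts[(i : ℕ)] (List.getElem_mem i.2)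
          (hnd.sublist (varList_sublist_of_mem (List.getElem_mem i.2))) _ σ ?_
        intro q₀ f₁ ts₁ hsub
        have hii := h ((i : ℕ) :: q₀) f₁ ts₁
          (by simp only [Term.sub?_cons_app, List.getElem?_eq_getElem i.2,
                Option.bind_some]; exact hsub)
        have e1 : node? ((i : ℕ) :: q₀) (Term.app g ts') =
            node? q₀ (ts'[(i : ℕ)]'(by omega)) := by
          simp [node?, List.getElem?_eq_getElem (show (i : ℕ) < ts'.length by omega)]
        have e2 : node? ((i : ℕ) :: q₀) ((Term.app g ts).subst σ) =
            node? q₀ (ts[(i : ℕ)].subst σ) := by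
          simp [node?, Term.subst_app, List.getElem?_eq_getElem i.2]
        rw [e1, e2] at hii
        exact hii
      choose gσ h1 h2 using hch
      classical
      set σ' : ℕ → Term α := fun x =>
        if hx : ∃ i : Fin ts.length, x ∈ ts[(i : ℕ)].varList then gσ hx.choose x
        else Term.var x with hσ'def
      have hσ' : ∀ (i : Fin ts.length) x, x ∈ ts[(i : ℕ)].varList → σ' x = gσ i x := by
        intro i x hx
        have hex : ∃ i : Fin ts.length, x ∈ ts[(i : ℕ)].varList := ⟨i, hx⟩
        have hxj : x ∈ ts[(hex.choose : ℕ)].varList := hex.choose_spec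
        have hij : (hex.choose : ℕ) = (i : ℕ) := by
          by_contra hne
          exact flatMap_nodup_disjoint hnd (List.getElem?_eq_getElem hex.choose.2)
            (List.getElem?_eq_getElem i.2) hne hxj hx
        have heq : hex.choose = i := Fin.ext hij
        rw [hσ'def]
        simp only [dif_pos hex]
        rw [heq]
      have hsubsti : ∀ i : Fin ts.length, ts[(i : ℕ)].subst σ' = ts[(i : ℕ)].subst (gσ i) :=
        fun i => Term.subst_congr (fun x hx => hσ' i x hx)
      refine ⟨σ', ?_, ?_⟩
      · simp only [Term.subst_app]
        congr 1
        refine List.ext_getElem (by simp [hlen]) fun i hi hi' => ?_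
        have hi2 : i < ts.length := by simpa using hi'
        have := h1 ⟨i, hi2⟩
        simp only at this
        rw [List.getElem_map]
        rw [hsubsti ⟨i, hi2⟩]
        exact this
      · intro x qx hqx
        cases qx with
        | nil => simp at hqx
        | cons i p =>
          simp only [Term.sub?_cons_app] at hqx
          obtain ⟨τ, hτ, hsub⟩ := Option.bind_eq_some_iff.1 hqx
          obtain ⟨hi2, rfl⟩ := List.getElem?_eq_some_iff.mp hτ
          have hx : x ∈ ts[i].varList := Term.mem_varList_iff.2 ⟨p, hsub⟩
          have := h2 ⟨i, hi2⟩ x p hsub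
          simp only [Term.sub?_cons_app, List.getElem?_eq_getElem
            (show i < ts'.length by omega), Option.bind_some]
          rw [hσ' ⟨i, hi2⟩ x hx]
          exact this

end AuxStatement10D
section AuxStatement10E

variable {α : Type u}

/-- `q` is dead w.r.t. the set `B` of based positions: no based position at or below it. -/
private def DeadB (B : Set Pos) (q : Pos) : Prop := ∀ b ∈ B, ¬ q <+: b

/-- All app-nodes of `s` at dead positions of `N` carry `F`-symbols. -/
private def SoundN (F : Set α) (B N : Set Pos) (s : Term α) : Prop :=
  ∀ q ∈ N, DeadB B q → ∀ f ts, Term.sub? q s = some (.app f ts) → f ∈ F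

/-- `s'` has the same nodes as `s` at all positions of `N`. -/
private def Retains (N : Set Pos) (s s' : Term α) : Prop :=
  ∀ q ∈ N, node? q s' = node? q s

private theorem node?_eq_app {q : Pos} {t : Term α} {f : α} {k : ℕ}
    (h : node? q t = some (.inr (f, k))) :
    ∃ ts, Term.sub? q t = some (.app f ts) ∧ ts.length = k := by
  unfold node? at h
  cases hs : Term.sub? q t with
  | none => rw [hs] at h; simp at h
  | some w =>
    rw [hs] at h
    cases w with
    | var x => simp [nodeOf] at h
    | app g ts =>
      simp only [Option.map_some, nodeOf, Option.some.injEq, Sum.inr.injEq,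
        Prod.mk.injEq] at h
      obtain ⟨rfl, rfl⟩ := h
      exact ⟨ts, rfl, rfl⟩

private theorem mem_nextB_cases {B : Set Pos} {p : Pos} {l r : Term α} {b : Pos}
    (hb : b ∈ nextB B p l r) :
    (b ∈ B ∧ ¬ p <+: b) ∨
    (∃ q', (∃ f ts, Term.sub? q' r = some (.app f ts)) ∧ b = p ++ q') ∨
    (∃ pv p' q' x, Term.sub? pv l = some (.var x) ∧ Term.sub? p' r = some (.var x) ∧
      (p ++ pv ++ q') ∈ B ∧ b = p ++ p' ++ q') := by
  rcases hb with (h | h) | h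
  · exact Or.inl h
  · obtain ⟨q', hq', rfl⟩ := h
    exact Or.inr (Or.inl ⟨q', hq', rfl⟩)
  · obtain ⟨pv, p', q', hpv, heq, hB, rfl⟩ := h
    obtain ⟨x, hx⟩ := hpv
    refine Or.inr (Or.inr ⟨pv, p', q', x, hx, ?_, hB, rfl⟩)
    rw [← heq, hx]

private theorem dead_nextB_outside {B : Set Pos} {p q : Pos} {l r : Term α}
    (hq : DeadB B q) (hnp : ¬ p <+: q) (hpB : p ∈ B) : DeadB (nextB B p l r) q := by
  intro b hb hqb
  rcases mem_nextB_cases hb with ⟨hbB, _⟩ | ⟨q', _, rfl⟩ | ⟨pv, p', q'', x, _, _, _, rfl⟩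
  · exact hq b hbB hqb
  · rcases prefix_append_cases hqb with h | ⟨u', rfl, _⟩
    · exact hq p hpB h
    · exact hnp (List.prefix_append p u')
  · rw [List.append_assoc] at hqb
    rcases prefix_append_cases hqb with h | ⟨u', rfl, _⟩
    · exact hq p hpB h
    · exact hnp (List.prefix_append p u')

/-- A variable position of `r` below a variable `x` cannot become based unless some
occurrence of `x` in `l` has a based position below the corresponding source. -/
private theorem dead_nextB_under_var {B : Set Pos} {p e₀ e' : Pos} {l r : Term α} {x : ℕ}
    (he₀ : Term.sub? e₀ r = some (.var x))
    (hsafe : ∀ qx, Term.sub? qx l = some (.var x) → DeadB B (p ++ (qx ++ e'))) :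
    DeadB (nextB B p l r) (p ++ (e₀ ++ e')) := by
  intro b hb hqb
  rcases mem_nextB_cases hb with ⟨hbB, hnpb⟩ | ⟨q', ⟨f, ts, hq'⟩, rfl⟩ |
    ⟨pv, p', q'', z, hpv, hp', hB, rfl⟩
  · exact hnpb ((List.prefix_append p (e₀ ++ e')).trans hqb)
  · have h1 : e₀ ++ e' <+: q' := (List.prefix_append_right_inj p).1 hqb
    have h2 : e₀ <+: q' := (List.prefix_append e₀ e').trans h1
    obtain ⟨rest, rfl⟩ := h2
    cases rest with
    | nil => rw [List.append_nil] at hq'; rw [he₀] at hq'; simp at hq'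
    | cons i rs =>
      rw [Term.sub?_some_append he₀] at hq'
      simp at hq'
  · rw [List.append_assoc] at hqb
    have h1 : e₀ ++ e' <+: p' ++ q'' := (List.prefix_append_right_inj p).1 hqb
    have h2 : e₀ <+: p' ++ q'' := (List.prefix_append e₀ e').trans h1
    have h3 : e₀ <+: p' ∨ p' <+: e₀ := prefix_total h2 (List.prefix_append p' q'')
    have he₀p' : e₀ = p' := by
      rcases h3 with h | h
      · obtain ⟨rest, rfl⟩ := h
        cases rest with
        | nil => rw [List.append_nil]
        | cons i rs => rw [Term.sub?_some_append he₀] at hp'; simp at hp'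
      · obtain ⟨rest, rfl⟩ := h
        cases rest with
        | nil => rw [List.append_nil]
        | cons i rs => rw [Term.sub?_some_append hp'] at he₀; simp at he₀
      
    subst he₀p'
    rw [he₀] at hp'
    simp only [Option.some.injEq, Term.var.injEq] at hp'
    subst hp'
    have he'q : e' <+: q'' := by
      have := (List.prefix_append_right_inj e₀).1 h1
      exact this
    exact hsafe pv hpv (p ++ pv ++ q'') hB
      (by rw [List.append_assoc]
          exact (List.prefix_append_right_inj p).2
            ((List.prefix_append_right_inj pv).2 he'q))

end AuxStatement10E
section AuxStatement10F

variable {α : Type u}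

private theorem main_sim {F : Set α} {S : Set (ERule α)}
    (hLL : ∀ ρ ∈ S, ρ.lhs.varList.Nodup)
    (hP1 : ∀ ρ ∈ S, ∀ (q : Pos) (f : α) (ts : List (Term α)), q ≠ [] →
      Term.sub? q ρ.lhs = some (.app f ts) → f ∈ F)
    {B : Set Pos} {s t : Term α} (h : EVSeq S (fun _ => True) B s t) :
    t.overSig F →
      ∃ N : Set Pos, PCl N ∧ SoundN F B N s ∧
        ∀ s', Retains N s s' → EVSeq S (fun w => w.overSig F) B s' t := by
  induction h with
  | refl B t =>
    intro ht
    refine ⟨Set.univ, fun _ _ _ _ => Set.mem_univ _, ?_, ?_⟩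
    · intro q _ _ f ts hq
      exact Term.overSig_iff.1 ht q f ts hq
    · intro s' hret
      have : s' = t := Term.node_ext (fun q => hret q (Set.mem_univ q))
      rw [this]
      exact EVSeq.refl _ _
  | @step B s s₁ t p ρ σ hρ hcond hsub hrepl hpB _ _ ih =>
    intro ht
    obtain ⟨N₁, hpc₁, hsound₁, hsim₁⟩ := ih ht
    subst hrepl
    have hlin : ρ.lhs.varList.Nodup := hLL ρ hρ
    classical
    -- the pulled-back set of needed positions
    refine ⟨{q | (q ∈ N₁ ∧ ¬ p <+: q) ∨ (q <+: p) ∨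
        (∃ q₀ f ts, q = p ++ q₀ ∧ Term.sub? q₀ ρ.lhs = some (.app f ts)) ∨
        (∃ x qx e₀ e', q = p ++ (qx ++ e') ∧ Term.sub? qx ρ.lhs = some (.var x) ∧
          Term.sub? e₀ ρ.rhs = some (.var x) ∧ p ++ (e₀ ++ e') ∈ N₁)}, ?_, ?_, ?_⟩
    -- (1) prefix-closedness
    · intro q₁ q₂ hpre hq₂
      simp only [Set.mem_setOf_eq] at hq₂ ⊢
      rcases hq₂ with ⟨hq₂N, hq₂p⟩ | hq₂p |
        ⟨q₀, f, ts, rfl, hq₀⟩ | ⟨x, qx, e₀, e', rfl, hqx, he₀, hmem⟩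
      · exact Or.inl ⟨hpc₁ q₁ q₂ hpre hq₂N, fun hc => hq₂p (hc.trans hpre)⟩
      · exact Or.inr (Or.inl (hpre.trans hq₂p))
      · rcases prefix_append_cases hpre with h | ⟨u', rfl, hu⟩
        · exact Or.inr (Or.inl h)
        · by_cases hu' : u' = q₀
          · subst hu'
            exact Or.inr (Or.inr (Or.inl ⟨u', f, ts, rfl, hq₀⟩))
          · obtain ⟨f', ts', hf'⟩ := sub?_app_of_proper_prefix hq₀ hu hu'
            exact Or.inr (Or.inr (Or.inl ⟨u', f', ts', rfl, hf'⟩))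
      · rcases prefix_append_cases hpre with h | ⟨u', rfl, hu⟩
        · exact Or.inr (Or.inl h)
        · rcases prefix_total hu (List.prefix_append qx e') with h1 | h1
          · by_cases hu' : u' = qx
            · subst hu'
              refine Or.inr (Or.inr (Or.inr ⟨x, u', e₀, [], by rw [List.append_nil], hqx, he₀, ?_⟩))
              refine hpc₁ _ _ ?_ hmem
              rw [List.append_nil]
              exact (List.prefix_append_right_inj p).2 (List.prefix_append e₀ e')
            · obtain ⟨f', ts', hf'⟩ := sub?_app_of_proper_prefix hqx h1 hu'
              exact Or.inr (Or.inr (Or.inl ⟨u', f', ts', rfl, hf'⟩))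
          · obtain ⟨e'', rfl⟩ := h1
            have he'' : e'' <+: e' := (List.prefix_append_right_inj qx).1 hu
            refine Or.inr (Or.inr (Or.inr ⟨x, qx, e₀, e'', rfl, hqx, he₀, ?_⟩))
            refine hpc₁ _ _ ?_ hmem
            exact (List.prefix_append_right_inj p).2 ((List.prefix_append_right_inj e₀).2 he'')
    -- (2) soundness of the needed positions
    · intro q hqN hdead f₁ ts₁ hsubq
      simp only [Set.mem_setOf_eq] at hqN
      rcases hqN with ⟨hq₁N, hnp⟩ | hqp |
        ⟨q₀, f, ts, rfl, hq₀⟩ | ⟨x, qx, e₀, e', rfl, hqx, he₀, hmem⟩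
      · have hdead₁ : DeadB (nextB B p ρ.lhs ρ.rhs) q := dead_nextB_outside hdead hnp hpB
        have hnode : node? q (Term.replaceAt (ρ.rhs.subst σ) p s) = node? q s :=
          node?_replaceAt_not_prefix _ _ hnp
        have : node? q s = some (.inr (f₁, ts₁.length)) := by
          unfold node?; rw [hsubq]; simp [nodeOf]
        rw [this] at hnode
        obtain ⟨ts₂, hts₂, _⟩ := node?_eq_app hnode
        exact hsound₁ q hq₁N hdead₁ f₁ ts₂ hts₂
      · exact absurd hqp (hdead p hpB)
      · by_cases hq₀ne : q₀ = []
        · subst hq₀ne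
          exfalso
          apply hdead p hpB
          rw [List.append_nil]
        · have : Term.sub? (p ++ q₀) s = Term.sub? q₀ (ρ.lhs.subst σ) := Term.sub?_some_append hsub
          rw [this] at hsubq
          have := Term.sub?_subst σ hq₀
          rw [this] at hsubq
          simp only [Term.subst_app, Option.some.injEq] at hsubq
          have hf : f₁ = f := by
            cases hsubq; rfl
          subst hf
          exact hP1 ρ hρ q₀ f₁ ts hq₀ne hq₀
      · have hdead₁ : DeadB (nextB B p ρ.lhs ρ.rhs) (p ++ (e₀ ++ e')) := by
          refine dead_nextB_under_var he₀ ?_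
          intro qx' hqx'
          have : qx' = qx := linear_var_pos_unique hlin hqx' hqx
          subst this
          exact hdead
        have hval : Term.sub? (p ++ (e₀ ++ e')) (Term.replaceAt (ρ.rhs.subst σ) p s) =
            Term.sub? e' (σ x) := by
          rw [Term.sub?_replaceAt_append _ _ hsub, Term.sub?_subst_var σ he₀]
        have hsq : Term.sub? (p ++ (qx ++ e')) s = Term.sub? e' (σ x) := by
          rw [Term.sub?_some_append hsub, Term.sub?_subst_var σ hqx]
        rw [hsq] at hsubq
        exact hsound₁ _ hmem hdead₁ f₁ ts₁ (by rw [hval]; exact hsubq)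
    -- (3) the simulation
    · intro s' hret
      have hnodep : node? p s' = node? p s :=
        hret p (by exact Or.inr (Or.inl (List.prefix_refl p)))
      have hw' : ∃ w', Term.sub? p s' = some w' := by
        refine node?_isSome ?_
        rw [hnodep]
        unfold node?
        rw [hsub]
        simp
      obtain ⟨w', hw'⟩ := hw'
      obtain ⟨σ'₀, hw'eq, hσ'₀⟩ := match_linear ρ.lhs hlin w' σ (by
        intro q₀ f ts hq₀
        have h1 : node? q₀ w' = node? (p ++ q₀) s' := (node?_some_append hw').symm
        have h2 : node? (p ++ q₀) s' = node? (p ++ q₀) s :=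
          hret _ (by exact Or.inr (Or.inr (Or.inl ⟨q₀, f, ts, rfl, hq₀⟩)))
        have h3 : node? (p ++ q₀) s = node? q₀ (ρ.lhs.subst σ) := node?_some_append hsub
        rw [h1, h2, h3])
      -- clean instantiations for the remaining variables
      have hclean : ∀ z : ℕ, ∃ wz : Term α, z ∈ ρ.lhs.varFinset ∨
          (wz.overSig F ∧ ∀ e' ∈ {e' : Pos | ∃ e₀, Term.sub? e₀ ρ.rhs = some (.var z) ∧
            p ++ (e₀ ++ e') ∈ N₁}, node? e' wz = node? e' (σ z)) := by
        intro z
        by_cases hz : z ∈ ρ.lhs.varFinset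
        · exact ⟨.var 0, Or.inl hz⟩
        · have hnotin : ∀ qx, Term.sub? qx ρ.lhs ≠ some (.var z) := by
            intro qx hqx
            exact hz (List.mem_toFinset.2 (Term.mem_varList_iff.2 ⟨qx, hqx⟩))
          obtain ⟨wz, hwz1, hwz2⟩ := exists_clean F (σ z)
            {e' : Pos | ∃ e₀, Term.sub? e₀ ρ.rhs = some (.var z) ∧ p ++ (e₀ ++ e') ∈ N₁}
            (by
              intro q₁ q₂ hpre hq₂
              obtain ⟨e₀, he₀, hmem⟩ := hq₂
              refine ⟨e₀, he₀, hpc₁ _ _ ?_ hmem⟩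
              exact (List.prefix_append_right_inj p).2
                ((List.prefix_append_right_inj e₀).2 hpre))
            (by
              intro e' he' f ts hsubz
              obtain ⟨e₀, he₀, hmem⟩ := he'
              have hdead₁ : DeadB (nextB B p ρ.lhs ρ.rhs) (p ++ (e₀ ++ e')) :=
                dead_nextB_under_var he₀ (fun qx hqx => absurd hqx (hnotin qx))
              have hval : Term.sub? (p ++ (e₀ ++ e')) (Term.replaceAt (ρ.rhs.subst σ) p s) =
                  Term.sub? e' (σ z) := by
                rw [Term.sub?_replaceAt_append _ _ hsub, Term.sub?_subst_var σ he₀]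
              exact hsound₁ _ hmem hdead₁ f ts (by rw [hval]; exact hsubz))
          exact ⟨wz, Or.inr ⟨hwz1, hwz2⟩⟩
      choose gw hgw using hclean
      set σ' : ℕ → Term α := fun z => if z ∈ ρ.lhs.varFinset then σ'₀ z else gw z with hσ'def
      have hlσ' : ρ.lhs.subst σ' = ρ.lhs.subst σ'₀ := by
        refine Term.subst_congr ?_
        intro x hx
        rw [hσ'def]
        exact if_pos (List.mem_toFinset.2 hx)
      have hw'' : Term.sub? p s' = some (ρ.lhs.subst σ') := by
        rw [hlσ', ← hw'eq]; exact hw'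
      refine EVSeq.step p ρ σ' hρ hcond hw'' rfl hpB ?_ ?_
      · -- extra variables are instantiated by terms over F
        intro x hx
        rw [ERule.extraVars, Finset.mem_sdiff] at hx
        have : σ' x = gw x := by rw [hσ'def]; exact if_neg hx.2
        rw [this]
        rcases hgw x with hc | hc
        · exact absurd hc hx.2
        · exact hc.1
      · -- apply the simulation of the tail
        refine hsim₁ _ ?_
        intro q₁ hq₁
        by_cases hpq : p <+: q₁
        · obtain ⟨e, rfl⟩ := hpq
          have hL : node? (p ++ e) (Term.replaceAt (ρ.rhs.subst σ') p s') =
              node? e (ρ.rhs.subst σ') := node?_replaceAt_append _ _ hw''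
          have hR : node? (p ++ e) (Term.replaceAt (ρ.rhs.subst σ) p s) =
              node? e (ρ.rhs.subst σ) := node?_replaceAt_append _ _ hsub
          rw [hL, hR]
          rcases pos_trichotomy e ρ.rhs with ⟨f, ts, hfts⟩ | ⟨e₀, x, e', rfl, he₀⟩ | hnone
          · rw [node?_subst_app σ' hfts, node?_subst_app σ hfts]
          · rw [node?_subst_var σ' he₀, node?_subst_var σ he₀]
            by_cases hx : x ∈ ρ.lhs.varFinset
            · have hσ'x : σ' x = σ'₀ x := by rw [hσ'def]; exact if_pos hx
              rw [hσ'x]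
              obtain ⟨qx, hqx⟩ := Term.mem_varList_iff.1 (List.mem_toFinset.1 hx)
              have h1 : Term.sub? qx w' = some (σ'₀ x) := hσ'₀ x qx hqx
              have h2 : node? e' (σ'₀ x) = node? (qx ++ e') w' := (node?_some_append h1).symm
              have h3 : node? (qx ++ e') w' = node? (p ++ (qx ++ e')) s' :=
                (node?_some_append hw').symm
              have h4 : node? (p ++ (qx ++ e')) s' = node? (p ++ (qx ++ e')) s :=
                hret _ (by exact Or.inr (Or.inr (Or.inr ⟨x, qx, e₀, e', rfl, hqx, he₀, hq₁⟩)))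
              have h5 : node? (p ++ (qx ++ e')) s = node? (qx ++ e') (ρ.lhs.subst σ) :=
                node?_some_append hsub
              have h6 : node? (qx ++ e') (ρ.lhs.subst σ) = node? e' (σ x) :=
                node?_subst_var σ hqx
              rw [h2, h3, h4, h5, h6]
            · have hσ'x : σ' x = gw x := by rw [hσ'def]; exact if_neg hx
              rw [hσ'x]
              rcases hgw x with hc | hc
              · exact absurd hc hx
              · exact hc.2 e' ⟨e₀, he₀, hq₁⟩
          · unfold node?
            rw [hnone σ, hnone σ']
        · have h1 : node? q₁ (Term.replaceAt (ρ.rhs.subst σ') p s') = node? q₁ s' :=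
            node?_replaceAt_not_prefix _ _ hpq
          have h2 : node? q₁ s' = node? q₁ s := hret _ (by exact Or.inl ⟨hq₁, hpq⟩)
          have h3 : node? q₁ s = node? q₁ (Term.replaceAt (ρ.rhs.subst σ) p s) :=
            (node?_replaceAt_not_prefix _ _ hpq).symm
          rw [h1, h2, h3]

end AuxStatement10F
section AuxStatement10G

variable {α : Type u}

private theorem uopt_lhs_nodup {R : Set (ERule α)} {u : ERule α → ℕ → α}
    (hLL : ∀ ρ ∈ R, ∀ q ∈ unravelOpt (u ρ) ρ, q.LL) :
    ∀ ρ' ∈ UoptSys u R, ρ'.lhs.varList.Nodup := by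
  rintro ρ' ⟨ρ, hρ, hmem⟩
  exact hLL ρ hρ ρ' hmem

private theorem uopt_lhs_proper_overF {F : Set α} {R : Set (ERule α)} {u : ERule α → ℕ → α}
    (hsig : ∀ ρ ∈ R, ρ.overSig F) :
    ∀ ρ' ∈ UoptSys u R, ∀ (q : Pos) (f : α) (ts : List (Term α)), q ≠ [] →
      Term.sub? q ρ'.lhs = some (.app f ts) → f ∈ F := by
  rintro ρ' ⟨ρ, hρ, hmem⟩ q f ts hqne hsubq
  rw [unravelOpt, unravelWith] at hmem
  obtain ⟨j, hjmem, rfl⟩ := List.mem_map.1 hmem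
  have hj : j < ρ.conds.length + 1 := List.mem_range.1 hjmem
  simp only at hsubq
  by_cases hj0 : j = 0
  · rw [if_pos hj0] at hsubq
    exact Term.overSig_iff.1 (hsig ρ hρ).1 q f ts hsubq
  · rw [if_neg hj0] at hsubq
    cases q with
    | nil => exact absurd rfl hqne
    | cons i q' =>
      rw [mkU] at hsubq
      simp only [Term.sub?_cons_app] at hsubq
      obtain ⟨τ, hτ, hsub'⟩ := Option.bind_eq_some_iff.1 hsubq
      cases i with
      | zero =>
        simp only [List.getElem?_cons_zero, Option.some.injEq] at hτ
        subst hτ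
        have hjlt : j - 1 < ρ.conds.length := by omega
        have hget : ρ.conds.getD (j-1) junkPair = ρ.conds[j-1] := by
          rw [List.getD_eq_getElem?_getD, List.getElem?_eq_getElem hjlt]
          rfl
        rw [hget] at hsub'
        have hc := (hsig ρ hρ).2.2 ρ.conds[j-1] (List.getElem_mem hjlt)
        exact Term.overSig_iff.1 hc.2 q' f ts hsub'
      | succ n =>
        simp only [List.getElem?_cons_succ, List.getElem?_map] at hτ
        cases hv : (seqOf ((fun j => ρ.Zset j) (j-1)))[n]? with
        | none => rw [hv] at hτ; simp at hτ
        | some y =>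
          rw [hv] at hτ
          simp only [Option.map_some, Option.some.injEq] at hτ
          subst hτ
          cases q' with
          | nil => simp at hsub'
          | cons m q'' => simp at hsub'

end AuxStatement10G
/-- Let `R` be a `U_opt`-LL eDCTRS over a signature `F`, and let
`s, t ∈ T(F,V)`. If there is an EV-safe reduction sequence `s ↪*_{U_opt(R)} t`,
then there is an EV-safe reduction sequence `s ↪*_{U_opt(R)} t` that is
EV-instantiated on `T(F,V)`. -/
theorem uopt_LL_EVsafe_EVinstantiated {α : Type u} (F : Set α) (R : Set (ERule α))
    (u : ERule α → ℕ → α)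
    (hsig : ∀ ρ ∈ R, ρ.overSig F)
    (hdet : ∀ ρ ∈ R, ρ.Det)
    (hLL : ∀ ρ ∈ R, ∀ q ∈ unravelOpt (u ρ) ρ, q.LL)
    (hfresh : UFresh F u R)
    (s t : Term α) (hs : s.overSig F) (ht : t.overSig F)
    (h : EVSafe (UoptSys u R) s t) :
    EVSafeI (UoptSys u R) (fun w => w.overSig F) s t := by
  have h' : EVSeq (UoptSys u R) (fun _ => True) (PosF s) s t := h
  obtain ⟨N, _, _, hsim⟩ :=
    main_sim (uopt_lhs_nodup hLL) (uopt_lhs_proper_overF hsig) h' ht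
  exact hsim s (fun q _ => rfl)
end

section
/- Let R be a U_opt-LL eDCTRS over a signature F that is non-LV or non-RV. Then U_opt is sound for R w.r.t. EV-safe reduction: for all terms s, t ∈ T(F,V), if s ↪*_{U_opt(R)} t (an EV-safe reduction sequence of U_opt(R)), then s →*_R t. -/
set_option maxHeartbeats 1000000

universe u

/-! ### Auxiliary development -/

namespace Soundness

variable {α : Type u}

private theorem flatten_map_eq_foldr {β : Type*} (g : β → List ℕ) (l : List β) :
    (l.map g).flatten = l.foldr (fun a acc => g a ++ acc) [] := by
  induction l with
  | nil => rfl
  | cons a l ih => simp only [List.map_cons, List.flatten_cons, List.foldr_cons, ih]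

/-- Custom induction principle for `Term`. -/
theorem Term.indOn {P : Term α → Prop} (t : Term α)
    (hv : ∀ x, P (.var x))
    (ha : ∀ f ts, (∀ s ∈ ts, P s) → P (.app f ts)) : P t := by
  induction t using Term.varList.induct with
  | case1 x => exact hv x
  | case2 f ts ih =>
      exact ha f ts (fun s hs => ih ⟨s, hs⟩)

theorem subst_app (σ : ℕ → Term α) (f : α) (ts : List (Term α)) :
    Term.subst σ (.app f ts) = .app f (ts.map (Term.subst σ)) := by
  rw [Term.subst]
  congr 1
  simp

@[simp] theorem subst_var (σ : ℕ → Term α) (x : ℕ) :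
    Term.subst σ (.var x) = σ x := by rw [Term.subst]

theorem varList_app (f : α) (ts : List (Term α)) :
    Term.varList (.app f ts) = (ts.map Term.varList).flatten := by
  rw [Term.varList, flatten_map_eq_foldr]
  exact List.foldr_attach (l := ts) (f := fun a acc => a.varList ++ acc) (b := [])

theorem varList_var (x : ℕ) : Term.varList (Term.var (α := α) x) = [x] := by
  rw [Term.varList]

theorem mem_varFinset_app {f : α} {ts : List (Term α)} {x : ℕ} :
    x ∈ Term.varFinset (.app f ts) ↔ ∃ t ∈ ts, x ∈ t.varFinset := by
  simp [Term.varFinset, varList_app]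

@[simp] theorem mem_varFinset_var {x y : ℕ} :
    x ∈ Term.varFinset (Term.var (α := α) y) ↔ x = y := by
  simp [Term.varFinset, varList_var]

theorem subst_congr {σ σ' : ℕ → Term α} {t : Term α}
    (h : ∀ x ∈ t.varFinset, σ x = σ' x) : t.subst σ = t.subst σ' := by
  induction t using Term.indOn with
  | hv x => simpa using h x (by simp)
  | ha f ts ih =>
      rw [subst_app, subst_app]
      congr 1
      exact List.map_congr_left fun s hs =>
        ih s hs (fun x hx => h x (mem_varFinset_app.2 ⟨s, hs, hx⟩))

private theorem flatten_map_eq_foldr' {β : Type*} (g : β → List (α × ℕ)) (l : List β) :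
    (l.map g).flatten = l.foldr (fun a acc => g a ++ acc) [] := by
  induction l with
  | nil => rfl
  | cons a l ih => simp only [List.map_cons, List.flatten_cons, List.foldr_cons, ih]

theorem apps_app (f : α) (ts : List (Term α)) :
    Term.apps (.app f ts) = (f, ts.length) :: (ts.map Term.apps).flatten := by
  rw [Term.apps]
  congr 1
  rw [flatten_map_eq_foldr']
  exact List.foldr_attach (l := ts) (f := fun a acc => a.apps ++ acc) (b := [])

theorem overSig_app {F : Set α} {f : α} {ts : List (Term α)} :
    Term.overSig F (.app f ts) ↔ f ∈ F ∧ ∀ t ∈ ts, t.overSig F := by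
  simp only [Term.overSig, apps_app]
  constructor
  · intro h
    refine ⟨h (f, ts.length) (by simp), fun t ht p hp => h p ?_⟩
    simp only [List.mem_cons, List.mem_flatten]
    exact Or.inr ⟨t.apps, List.mem_map_of_mem ht, hp⟩
  · rintro ⟨hf, h⟩ p hp
    simp only [List.mem_cons, List.mem_flatten, List.mem_map] at hp
    rcases hp with rfl | ⟨_, ⟨t, ht, rfl⟩, hp⟩
    · exact hf
    · exact h t ht p hp

theorem overSig_var {F : Set α} {x : ℕ} : Term.overSig F (Term.var x) := by
  intro p hp
  rw [Term.apps] at hp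
  simp at hp

end Soundness
namespace Soundness

variable {α : Type u}

/-! ### Positions -/

@[simp] theorem sub?_nil (t : Term α) : Term.sub? [] t = some t := rfl

theorem sub?_cons_app (i : ℕ) (p : Pos) (f : α) (ts : List (Term α)) :
    Term.sub? (i :: p) (.app f ts) = ts[i]?.bind (Term.sub? p) := rfl

theorem sub?_cons_var (i : ℕ) (p : Pos) (x : ℕ) :
    Term.sub? (i :: p) (Term.var (α := α) x) = none := rfl

theorem sub?_append (p q : Pos) (t : Term α) :
    Term.sub? (p ++ q) t = (Term.sub? p t).bind (Term.sub? q) := by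
  induction p generalizing t with
  | nil => simp
  | cons i p ih =>
      cases t with
      | var x => rfl
      | app f ts =>
          rw [List.cons_append, sub?_cons_app, sub?_cons_app]
          cases h : ts[i]? with
          | none => rfl
          | some s => simp [ih]

@[simp] theorem replaceAt_nil (w t : Term α) : Term.replaceAt w [] t = w := rfl

theorem replaceAt_cons_app (w : Term α) (i : ℕ) (p : Pos) (f : α) (ts : List (Term α)) :
    Term.replaceAt w (i :: p) (.app f ts) =
      .app f (ts.mapIdx fun j s => if j = i then Term.replaceAt w p s else s) := rfl

/-! ### Down-sets of position sets -/

def dn (D : Set Pos) (i : ℕ) : Set Pos := {p | i :: p ∈ D}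
def dnP (D : Set Pos) (p : Pos) : Set Pos := {q | p ++ q ∈ D}

@[simp] theorem dnP_nil (D : Set Pos) : dnP D [] = D := rfl

theorem dnP_cons (D : Set Pos) (i : ℕ) (p : Pos) : dnP D (i :: p) = dnP (dn D i) p := rfl

theorem dn_mono {S T : Set Pos} (h : S ⊆ T) (i : ℕ) : dn S i ⊆ dn T i := fun _ hp => h hp

theorem dnP_mono {S T : Set Pos} (h : S ⊆ T) (p : Pos) : dnP S p ⊆ dnP T p := fun _ hq => h hq

/-! ### Basic facts about the reduction relation -/

def ctxComp : Ctx α → Ctx α → Ctx α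
  | .hole, C => C
  | .app f pre c post, C => .app f pre (ctxComp c C) post

theorem plug_comp (C C' : Ctx α) (t : Term α) :
    (ctxComp C C').plug t = C.plug (C'.plug t) := by
  induction C with
  | hole => rfl
  | app f pre c post ih => simp [ctxComp, Ctx.plug, ih]

theorem redN_succ {R : Set (ERule α)} {n : ℕ} {s t : Term α} (h : RedN R n s t) :
    RedN R (n + 1) s t := Or.inl h

theorem redN_mono {R : Set (ERule α)} {m n : ℕ} (h : m ≤ n) :
    ∀ {s t : Term α}, RedN R m s t → RedN R n s t := by
  induction h with
  | refl => exact fun h => h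
  | step _ ih => exact fun h => Or.inl (ih h)

theorem redN_ctx {R : Set (ERule α)} {n : ℕ} {s t : Term α} (C : Ctx α) (h : RedN R n s t) :
    RedN R n (C.plug s) (C.plug t) := by
  induction n with
  | zero => exact h.elim
  | succ n ih =>
      rcases h with h | ⟨ρ, hρ, C', σ, rfl, rfl, hc⟩
      · exact Or.inl (ih h)
      · exact Or.inr ⟨ρ, hρ, ctxComp C C', σ, (plug_comp ..).symm, (plug_comp ..).symm, hc⟩

theorem red_ctx {R : Set (ERule α)} {s t : Term α} (C : Ctx α) (h : Red R s t) :
    Red R (C.plug s) (C.plug t) := by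
  rcases h with ⟨n, hn⟩; exact ⟨n, redN_ctx C hn⟩

theorem redStar_ctx {R : Set (ERule α)} {s t : Term α} (C : Ctx α) (h : RedStar R s t) :
    RedStar R (C.plug s) (C.plug t) :=
  Relation.ReflTransGen.lift (p := Red R) C.plug (fun _ _ h => red_ctx C h) _ _ h

theorem redStar_app_cons {R : Set (ERule α)} (f : α) (pre post : List (Term α)) {a b : Term α}
    (h : RedStar R a b) :
    RedStar R (.app f (pre ++ a :: post)) (.app f (pre ++ b :: post)) :=
  redStar_ctx (Ctx.app f pre .hole post) h

theorem redStar_app_pre {R : Set (ERule α)} (f : α) :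
    ∀ (ms : List (Term α)) (pre as : List (Term α)), ms.length = as.length →
    (∀ (i : ℕ) (x y : Term α), ms[i]? = some x → as[i]? = some y → RedStar R x y) →
    RedStar R (.app f (pre ++ ms)) (.app f (pre ++ as)) := by
  intro ms
  induction ms with
  | nil =>
      intro pre as hlen _
      cases as with
      | nil => exact .refl
      | cons a as => exact absurd hlen (by simp)
  | cons m ms ih =>
      intro pre as hlen hs
      cases as with
      | nil => exact absurd hlen (by simp)
      | cons a as =>
          have h1 : RedStar R (.app f (pre ++ m :: ms)) (.app f (pre ++ a :: ms)) :=
            redStar_app_cons f pre ms (hs 0 m a (by simp) (by simp))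
          have h2 := ih (pre ++ [a]) as (by simpa using hlen)
            (fun i x y hx hy => hs (i+1) x y (by simpa using hx) (by simpa using hy))
          simp only [List.append_assoc, List.singleton_append] at h2
          exact h1.trans h2

theorem redStar_app {R : Set (ERule α)} (f : α) (ms as : List (Term α))
    (hlen : ms.length = as.length)
    (hs : ∀ (i : ℕ) (x y : Term α), ms[i]? = some x → as[i]? = some y → RedStar R x y) :
    RedStar R (.app f ms) (.app f as) := by
  have := redStar_app_pre (R := R) f ms [] as hlen hs
  simpa using this

theorem redStar_level {R : Set (ERule α)} {x y : Term α} (h : RedStar R x y) :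
    ∃ n, Relation.ReflTransGen (RedN R n) x y := by
  induction h with
  | refl => exact ⟨0, .refl⟩
  | tail _ hr ih =>
      rcases ih with ⟨n, hn⟩
      rcases hr with ⟨m, hm⟩
      exact ⟨max n m,
        (Relation.ReflTransGen.mono (p := RedN R (max n m)) (fun _ _ h => redN_mono (le_max_left n m) h) _ _ hn).tail
          (redN_mono (le_max_right n m) hm)⟩

private theorem conds_level {R : Set (ERule α)} (δ : ℕ → Term α) :
    ∀ (L : List (Term α × Term α)),
    (∀ c ∈ L, RedStar R (c.1.subst δ) (c.2.subst δ)) →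
    ∃ n, ∀ c ∈ L, Relation.ReflTransGen (RedN R n) (c.1.subst δ) (c.2.subst δ) := by
  intro L
  induction L with
  | nil => exact fun _ => ⟨0, by simp⟩
  | cons c L ih =>
      intro h
      rcases ih (fun c hc => h c (List.mem_cons_of_mem _ hc)) with ⟨n, hn⟩
      rcases redStar_level (h c (List.mem_cons_self)) with ⟨m, hm⟩
      refine ⟨max n m, fun d hd => ?_⟩
      rcases List.mem_cons.1 hd with rfl | hd
      · exact Relation.ReflTransGen.mono (p := RedN R (max n m)) (fun _ _ h => redN_mono (le_max_right n m) h) _ _ hm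
      · exact Relation.ReflTransGen.mono (p := RedN R (max n m)) (fun _ _ h => redN_mono (le_max_left n m) h) _ _ (hn d hd)

theorem red_of_conds {R : Set (ERule α)} {ρ : ERule α} (hρ : ρ ∈ R) (δ : ℕ → Term α)
    (hc : ∀ c ∈ ρ.conds, RedStar R (c.1.subst δ) (c.2.subst δ)) :
    Red R (ρ.lhs.subst δ) (ρ.rhs.subst δ) := by
  rcases conds_level δ ρ.conds hc with ⟨n, hn⟩
  exact ⟨n + 1, Or.inr ⟨ρ, hρ, Ctx.hole, δ, rfl, rfl, hn⟩⟩

end Soundness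
namespace Soundness

variable {α : Type u}

/-! ### Occurrences of variables -/


theorem mem_of_getElem?' {β : Type*} {l : List β} {i : ℕ} {x : β} (h : l[i]? = some x) :
    x ∈ l := by
  rcases List.getElem?_eq_some_iff.1 h with ⟨hi, rfl⟩
  exact List.getElem_mem hi

theorem mem_varFinset_of_sub? {t : Term α} {p : Pos} {x : ℕ}
    (h : Term.sub? p t = some (.var x)) : x ∈ t.varFinset := by
  induction t using Term.indOn generalizing p with
  | hv y =>
      cases p with
      | nil => simp_all
      | cons i p => rw [sub?_cons_var] at h; cases h
  | ha f ts ih =>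
      cases p with
      | nil => simp at h
      | cons i p =>
          rw [sub?_cons_app] at h
          cases hts : ts[i]? with
          | none => rw [hts] at h; cases h
          | some s =>
              rw [hts] at h
              have hmem : s ∈ ts := mem_of_getElem?' hts
              exact mem_varFinset_app.2 ⟨s, hmem, ih s hmem h⟩

theorem exists_pos_of_mem_varFinset {t : Term α} {x : ℕ} (h : x ∈ t.varFinset) :
    ∃ p, Term.sub? p t = some (.var x) := by
  induction t using Term.indOn with
  | hv y => exact ⟨[], by simp_all⟩
  | ha f ts ih =>
      rcases mem_varFinset_app.1 h with ⟨s, hs, hx⟩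
      rcases ih s hs hx with ⟨p, hp⟩
      rcases List.getElem_of_mem hs with ⟨i, hi, rfl⟩
      exact ⟨i :: p, by rw [sub?_cons_app, List.getElem?_eq_getElem hi]; exact hp⟩

theorem linear_app {f : α} {ts : List (Term α)} (h : Term.Linear (.app f ts)) :
    (∀ t ∈ ts, t.Linear) ∧
      ∀ (i j : ℕ) (hi : i < ts.length) (hj : j < ts.length), i ≠ j →
        ∀ x, x ∈ ts[i].varFinset → x ∉ ts[j].varFinset := by
  have h' := h
  rw [Term.Linear, varList_app, List.nodup_flatten] at h'
  obtain ⟨h1, h2⟩ := h'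
  constructor
  · intro t ht
    exact h1 _ (List.mem_map_of_mem ht)
  · rw [List.pairwise_map, List.pairwise_iff_getElem] at h2
    intro i j hi hj hij x hxi hxj
    simp only [Term.varFinset, List.mem_toFinset] at hxi hxj
    rcases Nat.lt_or_ge i j with hlt | hge
    · exact h2 i j hi hj hlt hxi hxj
    · exact h2 j i hj hi (lt_of_le_of_ne hge (Ne.symm hij)) hxj hxi

theorem uniq_var_pos {l : Term α} (hl : l.Linear) :
    ∀ {p q : Pos} {x : ℕ},
    Term.sub? p l = some (.var x) → Term.sub? q l = some (.var x) → p = q := by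
  induction l using Term.indOn with
  | hv y =>
      intro p q x hp hq
      cases p with
      | nil =>
          cases q with
          | nil => rfl
          | cons j q => rw [sub?_cons_var] at hq; cases hq
      | cons i p => rw [sub?_cons_var] at hp; cases hp
  | ha f ts ih =>
      intro p q x hp hq
      cases p with
      | nil => simp at hp
      | cons i p =>
          cases q with
          | nil => simp at hq
          | cons j q =>
              rw [sub?_cons_app] at hp hq
              cases hts : ts[i]? with
              | none => rw [hts] at hp; cases hp
              | some s =>
                  cases hts' : ts[j]? with
                  | none => rw [hts'] at hq; cases hq
                  | some s' =>
                      rw [hts] at hp; rw [hts'] at hq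
                      simp only [Option.bind_some] at hp hq
                      obtain ⟨hi, hsi⟩ := List.getElem?_eq_some_iff.1 hts
                      obtain ⟨hj, hsj⟩ := List.getElem?_eq_some_iff.1 hts'
                      by_cases hij : i = j
                      · subst hij
                        have : s = s' := by rw [← hsi, hsj]
                        subst this
                        have := ih s (mem_of_getElem?' hts)
                          ((linear_app hl).1 s (mem_of_getElem?' hts)) hp hq
                        rw [this]
                      · exfalso
                        have hxi : x ∈ ts[i].varFinset := by
                          rw [hsi]; exact mem_varFinset_of_sub? hp
                        have hxj : x ∈ ts[j].varFinset := by
                          rw [hsj]; exact mem_varFinset_of_sub? hq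
                        exact (linear_app hl).2 i j hi hj hij x hxi hxj

/-! ### `mkU` and `seqOf` -/

theorem subst_mkU (σ : ℕ → Term α) (f : α) (t : Term α) (xs : List ℕ) :
    Term.subst σ (mkU f t xs) = .app f (t.subst σ :: xs.map σ) := by
  rw [mkU, subst_app]
  simp [Function.comp]

theorem varList_mkU (f : α) (t : Term α) (xs : List ℕ) :
    (mkU f t xs).varList = t.varList ++ xs := by
  rw [mkU, varList_app]
  simp only [List.map_cons, List.map_map, List.flatten_cons]
  congr 1
  induction xs with
  | nil => rfl
  | cons x xs ih => simp_all [varList_var]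

theorem mem_varFinset_mkU {f : α} {t : Term α} {xs : List ℕ} {x : ℕ} :
    x ∈ (mkU f t xs).varFinset ↔ x ∈ t.varFinset ∨ x ∈ xs := by
  simp [Term.varFinset, varList_mkU]

theorem mem_seqOf {s : Finset ℕ} {x : ℕ} : x ∈ seqOf s ↔ x ∈ s := Finset.mem_sort _

theorem nodup_seqOf (s : Finset ℕ) : (seqOf s).Nodup := Finset.sort_nodup _ _

/-! ### Structure of `unravelOpt` -/

theorem mem_unravelOpt {u₀ : ℕ → α} {ρ q} :
    q ∈ unravelOpt u₀ ρ ↔ ∃ j < ρ.conds.length + 1,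
      q = ⟨(if j = 0 then ρ.lhs
             else mkU (u₀ (j-1)) (ρ.conds.getD (j-1) junkPair).2 (seqOf (ρ.Zset (j-1)))),
           (if j < ρ.conds.length
             then mkU (u₀ j) (ρ.conds.getD j junkPair).1 (seqOf (ρ.Zset j)) else ρ.rhs),
           []⟩ := by
  simp only [unravelOpt, unravelWith, List.mem_map, List.mem_range]
  constructor
  · rintro ⟨j, hj, rfl⟩; exact ⟨j, hj, rfl⟩
  · rintro ⟨j, hj, rfl⟩; exact ⟨j, hj, rfl⟩

end Soundness
namespace Soundness

variable {α : Type u}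

/-- Condition left-hand side `sᵢ` (0-based). -/
def sC (ρ : ERule α) (j : ℕ) : Term α := (ρ.conds.getD j junkPair).1
/-- Condition right-hand side `tᵢ` (0-based). -/
def tC (ρ : ERule α) (j : ℕ) : Term α := (ρ.conds.getD j junkPair).2

theorem mem_foldr_union₀ {M : List (Finset ℕ)} {x : ℕ} :
    (x ∈ M.foldr (· ∪ ·) ∅) ↔ ∃ s ∈ M, x ∈ s := by
  induction M with
  | nil => simp
  | cons c M ih => simp [ih]

theorem mem_foldr_union {β : Type*} {g : β → Finset ℕ} {L : List β} {x : ℕ} :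
    (x ∈ (L.map g).foldr (· ∪ ·) ∅) ↔ ∃ c ∈ L, x ∈ g c := by
  rw [mem_foldr_union₀]
  simp

theorem mem_Xset {ρ : ERule α} {j x : ℕ} :
    x ∈ ρ.Xset j ↔ x ∈ ρ.lhs.varFinset ∨ ∃ c ∈ ρ.conds.take j, x ∈ c.2.varFinset := by
  simp only [ERule.Xset, Finset.mem_union, mem_foldr_union₀, List.mem_map]
  aesop

theorem Xset_zero (ρ : ERule α) : ρ.Xset 0 = ρ.lhs.varFinset := by
  ext x; simp [mem_Xset]

theorem lhs_sub_Xset (ρ : ERule α) (j : ℕ) : ρ.lhs.varFinset ⊆ ρ.Xset j :=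
  fun _ hx => mem_Xset.2 (Or.inl hx)

theorem Xset_mono {ρ : ERule α} {j j' : ℕ} (h : j ≤ j') : ρ.Xset j ⊆ ρ.Xset j' := by
  intro x hx
  rcases mem_Xset.1 hx with hx | ⟨c, hc, hx⟩
  · exact mem_Xset.2 (Or.inl hx)
  · refine mem_Xset.2 (Or.inr ⟨c, ?_, hx⟩)
    have : ρ.conds.take j = (ρ.conds.take j').take j := by
      rw [List.take_take, min_eq_left h]
    rw [this] at hc
    exact List.take_subset _ _ hc

theorem Xset_succ {ρ : ERule α} {j : ℕ} (h : j < ρ.conds.length) :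
    ρ.Xset (j+1) = ρ.Xset j ∪ (tC ρ j).varFinset := by
  ext x
  simp only [mem_Xset, Finset.mem_union, List.take_succ, List.getElem?_eq_getElem h]
  simp only [Option.toList_some, List.mem_append, List.mem_singleton, tC,
    List.getD_eq_getElem?_getD, List.getElem?_eq_getElem h, Option.getD_some]
  constructor
  · rintro (hx | ⟨c, (hc | rfl), hx⟩)
    · exact Or.inl (Or.inl hx)
    · exact Or.inl (Or.inr ⟨c, hc, hx⟩)
    · exact Or.inr hx
  · rintro ((hx | ⟨c, hc, hx⟩) | hx)
    · exact Or.inl hx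
    · exact Or.inr ⟨c, Or.inl hc, hx⟩
    · exact Or.inr ⟨_, Or.inr rfl, hx⟩

theorem mem_Yset {ρ : ERule α} {j x : ℕ} :
    x ∈ ρ.Yset j ↔ x ∈ ρ.rhs.varFinset ∨ x ∈ (tC ρ j).varFinset ∨
      ∃ c ∈ ρ.conds.drop (j+1), x ∈ c.1.varFinset ∪ c.2.varFinset := by
  simp only [ERule.Yset, Finset.mem_union, mem_foldr_union, tC]
  aesop

theorem rhs_sub_Yset (ρ : ERule α) (j : ℕ) : ρ.rhs.varFinset ⊆ ρ.Yset j :=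
  fun _ hx => mem_Yset.2 (Or.inl hx)

theorem tC_sub_Yset (ρ : ERule α) (j : ℕ) : (tC ρ j).varFinset ⊆ ρ.Yset j :=
  fun _ hx => mem_Yset.2 (Or.inr (Or.inl hx))

theorem cond_mem_drop {ρ : ERule α} {j i : ℕ} (hj : j < i) (hi : i < ρ.conds.length) :
    ρ.conds.getD i junkPair ∈ ρ.conds.drop (j+1) := by
  rw [List.getD_eq_getElem?_getD, List.getElem?_eq_getElem hi, Option.getD_some]
  have hlt : i - (j+1) < (ρ.conds.drop (j+1)).length := by
    rw [List.length_drop]; omega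
  refine List.mem_iff_getElem.2 ⟨i - (j+1), hlt, ?_⟩
  rw [List.getElem_drop]
  congr 1
  omega

theorem sC_sub_Yset {ρ : ERule α} {j i : ℕ} (hj : j < i) (hi : i < ρ.conds.length) :
    (sC ρ i).varFinset ⊆ ρ.Yset j := by
  intro x hx
  exact mem_Yset.2 (Or.inr (Or.inr ⟨_, cond_mem_drop hj hi, Finset.mem_union_left _ hx⟩))

theorem tC_sub_Yset' {ρ : ERule α} {j i : ℕ} (hj : j < i) (hi : i < ρ.conds.length) :
    (tC ρ i).varFinset ⊆ ρ.Yset j := by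
  intro x hx
  exact mem_Yset.2 (Or.inr (Or.inr ⟨_, cond_mem_drop hj hi, Finset.mem_union_right _ hx⟩))

theorem Yset_succ_sub {ρ : ERule α} {j : ℕ} (h : j + 1 < ρ.conds.length) :
    ρ.Yset (j+1) ⊆ ρ.Yset j := by
  intro x hx
  rcases mem_Yset.1 hx with hx | hx | ⟨c, hc, hx⟩
  · exact rhs_sub_Yset ρ j hx
  · exact tC_sub_Yset' (Nat.lt_succ_self j) h hx
  · refine mem_Yset.2 (Or.inr (Or.inr ⟨c, ?_, hx⟩))
    have : ρ.conds.drop (j+2) = List.drop 1 (ρ.conds.drop (j+1)) := by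
      rw [List.drop_drop]
    rw [this] at hc
    exact List.drop_subset _ _ hc

theorem Zset_sub_Xset (ρ : ERule α) (j : ℕ) : ρ.Zset j ⊆ ρ.Xset j :=
  Finset.inter_subset_left

theorem mem_Zset {ρ : ERule α} {j x : ℕ} :
    x ∈ ρ.Zset j ↔ x ∈ ρ.Xset j ∧ x ∈ ρ.Yset j := Finset.mem_inter

theorem linear_mkU {f : α} {t : Term α} {xs : List ℕ} (h : Term.Linear (mkU f t xs)) :
    t.Linear ∧ ∀ x ∈ t.varFinset, x ∉ xs := by
  rw [Term.Linear, varList_mkU, List.nodup_append] at h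
  exact ⟨h.1, fun x hx hxs => h.2.2 x (by simpa [Term.varFinset] using hx) x hxs rfl⟩

end Soundness
namespace Soundness

variable {α : Type u}

theorem mem_nextB {B : Set Pos} {p : Pos} {l r : Term α} {q : Pos} :
    q ∈ nextB B p l r ↔
      (q ∈ B ∧ ¬ p <+: q) ∨
      (∃ q' ∈ PosF r, q = p ++ q') ∨
      (∃ pv p' q', pv ∈ PosV l ∧ Term.sub? pv l = Term.sub? p' r ∧
        (p ++ pv ++ q') ∈ B ∧ q = p ++ p' ++ q') := by
  simp only [nextB, Set.mem_union, Set.mem_setOf_eq, or_assoc]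

theorem nextB_dn_ne {D : Set Pos} {i : ℕ} {p : Pos} {l r : Term α} {j : ℕ} (hij : j ≠ i) :
    dn (nextB D (i :: p) l r) j ⊆ dn D j := by
  intro q hq
  rcases mem_nextB.1 hq with ⟨hD, _⟩ | ⟨q', _, heq⟩ | ⟨pv, p', q', _, _, _, heq⟩
  · exact hD
  · rw [List.cons_append] at heq; cases heq; exact absurd rfl hij
  · rw [List.append_assoc, List.cons_append] at heq; cases heq; exact absurd rfl hij

theorem nextB_dn_eq {D : Set Pos} {i : ℕ} {p : Pos} {l r : Term α} :
    dn (nextB D (i :: p) l r) i ⊆ nextB (dn D i) p l r := by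
  intro q hq
  rcases mem_nextB.1 hq with ⟨hD, hnp⟩ | ⟨q', hq', heq⟩ | ⟨pv, p', q', h1, h2, h3, heq⟩
  · refine mem_nextB.2 (Or.inl ⟨hD, fun hpq => hnp ?_⟩)
    exact List.cons_prefix_cons.2 ⟨rfl, hpq⟩
  · rw [List.cons_append] at heq
    cases heq
    exact mem_nextB.2 (Or.inr (Or.inl ⟨q', hq', rfl⟩))
  · rw [List.append_assoc, List.cons_append, ← List.append_assoc] at heq
    cases heq
    refine mem_nextB.2 (Or.inr (Or.inr ⟨pv, p', q', h1, h2, ?_, rfl⟩))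
    simpa [dn, List.append_assoc] using h3

theorem prefix_eq_of_sub?_var {t : Term α} {p₁ p₂ : Pos} {x₁ t₂ : Term α}
    (h₁ : Term.sub? p₁ t = some x₁) (hx : x₁.isVar)
    (h₂ : Term.sub? p₂ t = some t₂) (hpre : p₁ <+: p₂) : p₁ = p₂ := by
  rcases hpre with ⟨d, rfl⟩
  cases d with
  | nil => simp
  | cons i d =>
      exfalso
      rw [sub?_append, h₁] at h₂
      cases x₁ with
      | var y => rw [Option.bind_some, sub?_cons_var] at h₂; cases h₂
      | app f ts => exact hx

theorem nextB_root_var {D : Set Pos} {l r : Term α} {p' : Pos} {x : ℕ}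
    (hp' : Term.sub? p' r = some (.var x)) {q : Pos}
    (hq : q ∈ dnP (nextB D [] l r) p') :
    ∃ pv, Term.sub? pv l = some (.var x) ∧ q ∈ dnP D pv := by
  have hq' : (p' ++ q) ∈ nextB D [] l r := hq
  rcases mem_nextB.1 hq' with ⟨_, hnp⟩ | ⟨q', hq'', heq⟩ | ⟨pv, p'', q', h1, h2, h3, heq⟩
  · exact absurd List.nil_prefix hnp
  · exfalso
    rw [List.nil_append] at heq
    rcases hq'' with ⟨f, ts, hsub⟩
    rw [← heq, sub?_append, hp', Option.bind_some] at hsub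
    cases q with
    | nil => simp at hsub
    | cons i qq => rw [sub?_cons_var] at hsub; cases hsub
  · rcases h1 with ⟨y, hy⟩
    have hp'' : Term.sub? p'' r = some (.var y) := by rw [← h2, hy]
    have hpp : p' = p'' := by
      have hpre1 : p' <+: p'' ++ q' := heq ▸ List.prefix_append p' q
      have hpre2 : p'' <+: p'' ++ q' := List.prefix_append _ _
      rcases List.prefix_or_prefix_of_prefix hpre1 hpre2 with h | h
      · exact prefix_eq_of_sub?_var hp' (by trivial) hp'' h
      · exact (prefix_eq_of_sub?_var hp'' (by trivial) hp' h).symm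
    subst hpp
    have hqq : q = q' := List.append_cancel_left heq
    subst hqq
    have : x = y := by rw [hp'] at hp''; cases hp''; rfl
    subst this
    exact ⟨pv, hy, h3⟩

end Soundness
namespace Soundness

variable {α : Type u}

/-- The simulation invariant: `Sim R u D m a` means the source-side term `a`
`R`-reduces to a term matching the mixed term `m`, where at basic (`∈ D`)
positions with a U-symbol root the match is via a pending conditional-rule
block with already verified conditions. -/
inductive Sim (R : Set (ERule α)) (u : ERule α → ℕ → α) :
    Set Pos → Term α → Term α → Prop where
  | var : ∀ (D : Set Pos) (x : ℕ) (a : Term α),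
      RedStar R a (.var x) → Sim R u D (.var x) a
  | node : ∀ (D : Set Pos) (f : α) (ms as : List (Term α)) (a : Term α),
      (f ∉ USymbols u R ∨ [] ∉ D) →
      RedStar R a (.app f as) → ms.length = as.length →
      (∀ (i : ℕ) (x y : Term α), ms[i]? = some x → as[i]? = some y → Sim R u (dn D i) x y) →
      Sim R u D (.app f ms) a
  | ublock : ∀ (D : Set Pos) (ρ : ERule α) (i : ℕ) (w : Term α) (vs : List (Term α))
      (a : Term α) (δ : ℕ → Term α),
      ρ ∈ R → i < ρ.conds.length →
      vs.length = (seqOf (ρ.Zset i)).length →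
      RedStar R a (ρ.lhs.subst δ) →
      (∀ j < i, RedStar R ((sC ρ j).subst δ) ((tC ρ j).subst δ)) →
      Sim R u (dn D 0) w ((sC ρ i).subst δ) →
      (∀ (j : ℕ) (x : Term α), vs[j]? = some x →
        Sim R u (dn D (j+1)) x (δ ((seqOf (ρ.Zset i)).getD j 0))) →
      Sim R u D (.app (u ρ i) (w :: vs)) a

variable {R : Set (ERule α)} {u : ERule α → ℕ → α}

theorem sim_precomp {D : Set Pos} {m a b : Term α}
    (hab : RedStar R a b) (h : Sim R u D m b) : Sim R u D m a := by
  cases h with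
  | var D x _ hr => exact .var D x a (hab.trans hr)
  | node D f ms as _ hside hr hlen hch => exact .node D f ms as a hside (hab.trans hr) hlen hch
  | ublock D ρ i w vs _ δ h1 h2 h3 h4 h5 h6 h7 =>
      exact .ublock D ρ i w vs a δ h1 h2 h3 (hab.trans h4) h5 h6 h7

theorem sim_antitone {D : Set Pos} {m a : Term α}
    (h : Sim R u D m a) : ∀ {D' : Set Pos}, D' ⊆ D → Sim R u D' m a := by
  induction h with
  | var D x a hr => exact fun _ => .var _ x a hr
  | node D f ms as a hside hr hlen _ ih =>
      intro D' hsub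
      refine .node D' f ms as a ?_ hr hlen (fun i x y hx hy => ih i x y hx hy (dn_mono hsub i))
      rcases hside with h | h
      · exact Or.inl h
      · exact Or.inr (fun hmem => h (hsub hmem))
  | ublock D ρ i w vs a δ h1 h2 h3 h4 h5 _ _ ihw ihvs =>
      intro D' hsub
      exact .ublock D' ρ i w vs a δ h1 h2 h3 h4 h5 (ihw (dn_mono hsub 0))
        (fun j x hx => ihvs j x hx (dn_mono hsub (j+1)))

@[simp] theorem dn_empty (i : ℕ) : dn (∅ : Set Pos) i = ∅ := rfl

theorem sim_refl_empty (m : Term α) : Sim R u (∅ : Set Pos) m m := by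
  induction m using Term.indOn with
  | hv x => exact .var _ x _ .refl
  | ha f ts ih =>
      refine .node _ f ts ts _ (Or.inr (fun h => h)) .refl rfl ?_
      intro i x y hx hy
      rw [hx] at hy
      cases hy
      exact ih x (mem_of_getElem?' hx)

theorem sim_refl_over {F : Set α} (hfresh : UFresh F u R) {t : Term α}
    (ht : t.overSig F) (D : Set Pos) : Sim R u D t t := by
  induction t using Term.indOn generalizing D with
  | hv x => exact .var _ x _ .refl
  | ha f ts ih =>
      rcases overSig_app.1 ht with ⟨hf, hts⟩
      refine .node _ f ts ts _ (Or.inl ?_) .refl rfl ?_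
      · rintro ⟨ρ, hρ, i, hi, rfl⟩
        exact hfresh.1 ρ hρ i hi hf
      · intro i x y hx hy
        rw [hx] at hy
        cases hy
        exact ih x (mem_of_getElem?' hx) (hts x (mem_of_getElem?' hx)) _

theorem sim_fin {F : Set α} (hfresh : UFresh F u R) :
    ∀ {t : Term α}, t.overSig F → ∀ {D : Set Pos} {a : Term α},
      Sim R u D t a → RedStar R a t := by
  intro t
  induction t using Term.indOn with
  | hv x =>
      intro _ D a hsim
      cases hsim with
      | var _ _ _ hr => exact hr
  | ha f ts ih =>
      intro htF D a hsim
      rcases overSig_app.1 htF with ⟨hf, hts⟩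
      cases hsim with
      | node _ _ _ as _ hside hr hlen hch =>
          refine hr.trans (redStar_app f as ts hlen.symm ?_)
          intro i x y hx hy
          exact ih y (mem_of_getElem?' hy) (hts y (mem_of_getElem?' hy)) (hch i y x hy hx)
      | ublock _ ρ i w vs _ δ h1 h2 =>
          exact absurd hf (hfresh.1 ρ h1 i h2)

end Soundness
namespace Soundness

variable {α : Type u}
variable {F : Set α} {R : Set (ERule α)} {u : ERule α → ℕ → α}

/-- Inversion for `Sim` at an application. -/
theorem sim_app_inv {D : Set Pos} {f : α} {ms : List (Term α)} {a : Term α}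
    (h : Sim R u D (.app f ms) a) :
    (∃ as, (f ∉ USymbols u R ∨ [] ∉ D) ∧ RedStar R a (.app f as) ∧ ms.length = as.length ∧
      ∀ (i : ℕ) (x y : Term α), ms[i]? = some x → as[i]? = some y → Sim R u (dn D i) x y) ∨
    (∃ (ρ : ERule α) (i : ℕ) (w : Term α) (vs : List (Term α)) (δ : ℕ → Term α),
      ρ ∈ R ∧ i < ρ.conds.length ∧ f = u ρ i ∧ ms = w :: vs ∧
      vs.length = (seqOf (ρ.Zset i)).length ∧
      RedStar R a (ρ.lhs.subst δ) ∧
      (∀ j < i, RedStar R ((sC ρ j).subst δ) ((tC ρ j).subst δ)) ∧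
      Sim R u (dn D 0) w ((sC ρ i).subst δ) ∧
      (∀ (j : ℕ) (x : Term α), vs[j]? = some x →
        Sim R u (dn D (j+1)) x (δ ((seqOf (ρ.Zset i)).getD j 0)))) := by
  cases h with
  | node _ _ _ as _ hside hr hlen hch => exact Or.inl ⟨as, hside, hr, hlen, hch⟩
  | ublock _ ρ i w vs _ δ h1 h2 h3 h4 h5 h6 h7 =>
      exact Or.inr ⟨ρ, i, w, vs, δ, h1, h2, rfl, rfl, h3, h4, h5, h6, h7⟩

/-- Extraction of a read-back substitution through a linear pattern. -/
theorem ext_sim (hfresh : UFresh F u R) :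
    ∀ (l : Term α), l.Linear → l.overSig F →
    ∀ {D : Set Pos} {a : Term α} {σ : ℕ → Term α},
    Sim R u D (l.subst σ) a →
    ∃ μ : ℕ → Term α, RedStar R a (l.subst μ) ∧
      ∀ (pv : Pos) (x : ℕ), Term.sub? pv l = some (.var x) →
        Sim R u (dnP D pv) (σ x) (μ x) := by
  intro l
  induction l using Term.indOn with
  | hv y =>
      intro _ _ D a σ hsim
      rw [subst_var] at hsim
      refine ⟨fun _ => a, by rw [subst_var]; exact .refl, ?_⟩
      intro pv x hpv
      cases pv with
      | nil =>
          simp only [sub?_nil, Option.some.injEq] at hpv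
          cases hpv
          exact hsim
      | cons i p => rw [sub?_cons_var] at hpv; cases hpv
  | ha f ls ih =>
      intro hlin hsig D a σ hsim
      rcases overSig_app.1 hsig with ⟨hf, hls⟩
      rw [subst_app] at hsim
      have hmain : ∃ as, (f ∉ USymbols u R ∨ [] ∉ D) ∧
          RedStar R a (.app f as) ∧ (ls.map (Term.subst σ)).length = as.length ∧
          ∀ (i : ℕ) (x y : Term α), (ls.map (Term.subst σ))[i]? = some x → as[i]? = some y →
            Sim R u (dn D i) x y := by
        rcases sim_app_inv hsim with h | ⟨ρ, i, w, vs, δ, h1, h2, rfl, _⟩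
        · exact h
        · exact absurd hf (hfresh.1 ρ h1 i h2)
      obtain ⟨as, hside, hred, hlen, hch⟩ := hmain
      -- choose per-child extraction substitutions
      have hlen' : ls.length = as.length := by simpa using hlen
      have Hch : ∀ i : Fin ls.length, ∃ μ : ℕ → Term α,
          RedStar R (as[i.1]'(hlen' ▸ i.2)) (ls[(i : ℕ)].subst μ) ∧
          ∀ (pv : Pos) (x : ℕ), Term.sub? pv ls[(i : ℕ)] = some (.var x) →
            Sim R u (dnP (dn D i) pv) (σ x) (μ x) := by
        intro i
        have hmem : ls[(i : ℕ)] ∈ ls := List.getElem_mem i.2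
        have hx : (ls.map (Term.subst σ))[(i : ℕ)]? = some (ls[(i : ℕ)].subst σ) := by
          rw [List.getElem?_map, List.getElem?_eq_getElem i.2]; rfl
        have hy : as[(i : ℕ)]? = some (as[i.1]'(hlen' ▸ i.2)) :=
          List.getElem?_eq_getElem _
        exact ih _ hmem ((linear_app hlin).1 _ hmem) (hls _ hmem)
          (hch i _ _ hx hy)
      choose μs hred2 hocc using Hch
      classical
      refine ⟨fun x => if h : ∃ i : Fin ls.length, x ∈ ls[(i : ℕ)].varFinset
          then μs h.choose x else Term.var x, ?_, ?_⟩
      · -- a →* app f as →* app f (ls.map (subst μ))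
        refine hred.trans ?_
        rw [subst_app]
        refine redStar_app f as _ (by simpa using hlen'.symm) ?_
        intro i x y hx hy
        rcases List.getElem?_eq_some_iff.1 hx with ⟨hi, rfl⟩
        have hi' : i < ls.length := by rwa [hlen']
        rw [List.getElem?_map, List.getElem?_eq_getElem hi', Option.map_some] at hy
        cases hy
        refine (hred2 ⟨i, hi'⟩).trans ?_
        have : ls[i].subst (fun x => if h : ∃ i : Fin ls.length, x ∈ ls[(i : ℕ)].varFinset
            then μs h.choose x else Term.var x) = ls[i].subst (μs ⟨i, hi'⟩) := by
          apply subst_congr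
          intro x hxv
          have hex : ∃ j : Fin ls.length, x ∈ ls[(j : ℕ)].varFinset := ⟨⟨i, hi'⟩, hxv⟩
          rw [dif_pos hex]
          congr 1
          by_contra hne
          exact (linear_app hlin).2 _ _ hex.choose.2 hi'
            (fun h => hne (Fin.ext h)) x hex.choose_spec hxv
        rw [this]
      · intro pv x hpv
        cases pv with
        | nil => simp at hpv
        | cons i p =>
            rw [sub?_cons_app] at hpv
            cases hts : ls[i]? with
            | none => rw [hts] at hpv; cases hpv
            | some s =>
                rw [hts, Option.bind_some] at hpv
                rcases List.getElem?_eq_some_iff.1 hts with ⟨hi, rfl⟩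
                have hxv : x ∈ ls[i].varFinset := mem_varFinset_of_sub? hpv
                have hex : ∃ j : Fin ls.length, x ∈ ls[(j : ℕ)].varFinset := ⟨⟨i, hi⟩, hxv⟩
                have heqf : (if h : ∃ i : Fin ls.length, x ∈ ls[(i : ℕ)].varFinset
                    then μs h.choose x else Term.var x) = μs ⟨i, hi⟩ x := by
                  rw [dif_pos hex]
                  congr 1
                  by_contra hne
                  exact (linear_app hlin).2 _ _ hex.choose.2 hi
                    (fun h => hne (Fin.ext h)) x hex.choose_spec hxv
                rw [dnP_cons]
                show Sim R u (dnP (dn D i) p) (σ x)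
                  (if h : ∃ i : Fin ls.length, x ∈ ls[(i : ℕ)].varFinset
                    then μs h.choose x else Term.var x)
                rw [heqf]
                exact hocc ⟨i, hi⟩ p x hpv

/-- Lifting the simulation through a substituted pattern over `F`. -/
theorem plug_sim (hfresh : UFresh F u R) :
    ∀ (r : Term α), r.overSig F → ∀ (E : Set Pos) (ν νh : ℕ → Term α),
    (∀ (p' : Pos) (x : ℕ), Term.sub? p' r = some (.var x) →
      Sim R u (dnP E p') (ν x) (νh x)) →
    Sim R u E (r.subst ν) (r.subst νh) := by
  intro r
  induction r using Term.indOn with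
  | hv x =>
      intro _ E ν νh h
      rw [subst_var, subst_var]
      simpa using h [] x (by simp)
  | ha f rs ih =>
      intro hsig E ν νh h
      rcases overSig_app.1 hsig with ⟨hf, hrs⟩
      rw [subst_app, subst_app]
      refine .node E f _ _ _ (Or.inl ?_) .refl (by simp) ?_
      · rintro ⟨ρ, hρ, i, hi, rfl⟩
        exact hfresh.1 ρ hρ i hi hf
      · intro i x y hx hy
        rw [List.getElem?_map] at hx hy
        cases hts : rs[i]? with
        | none => rw [hts] at hx; cases hx
        | some s =>
            rw [hts, Option.map_some] at hx hy
            cases hx; cases hy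
            refine ih s (mem_of_getElem?' hts) (hrs s (mem_of_getElem?' hts)) _ ν νh ?_
            intro p' x hp'
            rw [← dnP_cons]
            refine h (i :: p') x ?_
            rw [sub?_cons_app, hts, Option.bind_some]
            exact hp'

end Soundness
namespace Soundness

variable {α : Type u}
variable {F : Set α} {R : Set (ERule α)} {u : ERule α → ℕ → α}

theorem nextB_nil_notmem {D : Set Pos} {i : ℕ} {p : Pos} {l r : Term α}
    (h : [] ∉ D) : [] ∉ nextB D (i :: p) l r := by
  intro hmem
  rcases mem_nextB.1 hmem with ⟨hD, _⟩ | ⟨q', _, heq⟩ | ⟨pv, p', q', _, _, _, heq⟩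
  · exact h hD
  · rw [List.cons_append] at heq; cases heq
  · rw [List.append_assoc, List.cons_append] at heq; cases heq

@[simp] theorem dnP_singleton (D : Set Pos) (i : ℕ) : dnP D [i] = dn D i := rfl

theorem sub?_mkU_zero (f : α) (t : Term α) (xs : List ℕ) (p : Pos) :
    Term.sub? (0 :: p) (mkU f t xs) = Term.sub? p t := by
  rw [mkU, sub?_cons_app, List.getElem?_cons_zero, Option.bind_some]

theorem sub?_mkU_succ (f : α) (t : Term α) (xs : List ℕ) (jz : ℕ) :
    Term.sub? [jz + 1] (mkU f t xs) = (xs[jz]?).map Term.var := by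
  rw [mkU, sub?_cons_app, List.getElem?_cons_succ, List.getElem?_map]
  cases xs[jz]? <;> rfl

theorem occ_mkU_inv {f : α} {t : Term α} {xs : List ℕ} {pv : Pos} {x : ℕ}
    (h : Term.sub? pv (mkU f t xs) = some (.var x)) :
    (∃ pv', pv = 0 :: pv' ∧ Term.sub? pv' t = some (.var x)) ∨
    (∃ jz, pv = [jz + 1] ∧ xs[jz]? = some x) := by
  cases pv with
  | nil => rw [mkU] at h; simp at h
  | cons c pv' =>
      cases c with
      | zero =>
          rw [sub?_mkU_zero] at h
          exact Or.inl ⟨pv', rfl, h⟩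
      | succ jz =>
          rw [mkU, sub?_cons_app, List.getElem?_cons_succ, List.getElem?_map] at h
          cases hxs : xs[jz]? with
          | none => rw [hxs] at h; cases h
          | some z =>
              rw [hxs, Option.map_some, Option.bind_some] at h
              cases pv' with
              | nil =>
                  simp only [sub?_nil, Option.some.injEq, Term.var.injEq] at h
                  exact Or.inr ⟨jz, rfl, by rw [hxs, h]⟩
              | cons c' pv'' => rw [sub?_cons_var] at h; cases h

/-- The generic hypothesis feeding `plug_sim` after a root step with rule `L → Rr`. -/
theorem root_plug_hyp {D : Set Pos} {L Rr : Term α} {σ δ' : ℕ → Term α}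
    (hlin : L.Linear)
    (hocc : ∀ (pv : Pos) (x : ℕ), Term.sub? pv L = some (.var x) →
      Sim R u (dnP D pv) (σ x) (δ' x))
    (hnone : ∀ (x : ℕ), x ∈ Rr.varFinset → (∀ pv, Term.sub? pv L ≠ some (.var x)) →
      δ' x = σ x) :
    ∀ (p' : Pos) (x : ℕ), Term.sub? p' Rr = some (.var x) →
      Sim R u (dnP (nextB D [] L Rr) p') (σ x) (δ' x) := by
  intro p' x hp'
  by_cases hex : ∃ pv, Term.sub? pv L = some (.var x)
  · obtain ⟨pv, hpv⟩ := hex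
    refine sim_antitone (hocc pv x hpv) ?_
    intro q hq
    rcases nextB_root_var hp' hq with ⟨pv₂, hpv₂, hq₂⟩
    rwa [uniq_var_pos hlin hpv₂ hpv] at hq₂
  · push_neg at hex
    rw [hnone x (mem_varFinset_of_sub? hp') hex]
    refine sim_antitone (sim_refl_empty (σ x)) ?_
    intro q hq
    rcases nextB_root_var hp' hq with ⟨pv₂, hpv₂, _⟩
    exact absurd hpv₂ (hex pv₂)

/-- The unraveled rule with index `j+1` (whose left-hand side is
`U_j(t_j, Z_j)`), as a member of `unravelOpt`. -/
theorem Urule_mem (u₀ : ℕ → α) (ρ : ERule α) {j : ℕ} (hj : j < ρ.conds.length) :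
    (⟨mkU (u₀ j) (tC ρ j) (seqOf (ρ.Zset j)),
      (if j + 1 < ρ.conds.length
        then mkU (u₀ (j+1)) (sC ρ (j+1)) (seqOf (ρ.Zset (j+1))) else ρ.rhs),
      []⟩ : ERule α) ∈ unravelOpt u₀ ρ := by
  refine mem_unravelOpt.2 ⟨j + 1, by omega, ?_⟩
  simp only [Nat.add_sub_cancel, if_neg (Nat.succ_ne_zero j)]
  rfl

theorem tC_linear_and_disj (hLL : ∀ ρ ∈ R, ∀ q ∈ unravelOpt (u ρ) ρ, q.LL)
    {ρ : ERule α} (hρ : ρ ∈ R) {j : ℕ} (hj : j < ρ.conds.length) :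
    (tC ρ j).Linear ∧ ∀ x ∈ (tC ρ j).varFinset, x ∉ seqOf (ρ.Zset j) := by
  have := hLL ρ hρ _ (Urule_mem (u ρ) ρ hj)
  exact linear_mkU this

theorem tC_disj_Xset (hLL : ∀ ρ ∈ R, ∀ q ∈ unravelOpt (u ρ) ρ, q.LL)
    {ρ : ERule α} (hρ : ρ ∈ R) {j : ℕ} (hj : j < ρ.conds.length) :
    ∀ x ∈ (tC ρ j).varFinset, x ∉ ρ.Xset j := by
  intro x hx hX
  have hZ : x ∈ ρ.Zset j := mem_Zset.2 ⟨hX, tC_sub_Yset ρ j hx⟩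
  exact (tC_linear_and_disj hLL hρ hj).2 x hx (mem_seqOf.2 hZ)

theorem mkU_linear (hLL : ∀ ρ ∈ R, ∀ q ∈ unravelOpt (u ρ) ρ, q.LL)
    {ρ : ERule α} (hρ : ρ ∈ R) {j : ℕ} (hj : j < ρ.conds.length) :
    (mkU (u ρ j) (tC ρ j) (seqOf (ρ.Zset j))).Linear :=
  hLL ρ hρ _ (Urule_mem (u ρ) ρ hj)

theorem cond_mem_of_lt {ρ : ERule α} {j : ℕ} (hj : j < ρ.conds.length) :
    ρ.conds.getD j junkPair ∈ ρ.conds := by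
  rw [List.getD_eq_getElem?_getD, List.getElem?_eq_getElem hj, Option.getD_some]
  exact List.getElem_mem hj

theorem sC_overSig (hsig : ∀ ρ ∈ R, ρ.overSig F) {ρ : ERule α} (hρ : ρ ∈ R)
    {j : ℕ} (hj : j < ρ.conds.length) : (sC ρ j).overSig F :=
  ((hsig ρ hρ).2.2 _ (cond_mem_of_lt hj)).1

theorem tC_overSig (hsig : ∀ ρ ∈ R, ρ.overSig F) {ρ : ERule α} (hρ : ρ ∈ R)
    {j : ℕ} (hj : j < ρ.conds.length) : (tC ρ j).overSig F :=
  ((hsig ρ hρ).2.2 _ (cond_mem_of_lt hj)).2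

theorem sC_vars_sub (hdet : ∀ ρ ∈ R, ρ.Det) {ρ : ERule α} (hρ : ρ ∈ R)
    {j : ℕ} (hj : j < ρ.conds.length) : (sC ρ j).varFinset ⊆ ρ.Xset j :=
  hdet ρ hρ j hj

theorem tC_vars_sub {ρ : ERule α} {j : ℕ} (hj : j < ρ.conds.length) :
    (tC ρ j).varFinset ⊆ ρ.Xset (j+1) := by
  rw [Xset_succ hj]
  exact Finset.subset_union_right

end Soundness
namespace Soundness

variable {α : Type u}
variable {F : Set α} {R : Set (ERule α)} {u : ERule α → ℕ → α}

theorem lhs_linear (hLL : ∀ ρ ∈ R, ∀ q ∈ unravelOpt (u ρ) ρ, q.LL)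
    {ρ : ERule α} (hρ : ρ ∈ R) : ρ.lhs.Linear := by
  have hmem : (⟨ρ.lhs,
      (if 0 < ρ.conds.length
        then mkU (u ρ 0) (sC ρ 0) (seqOf (ρ.Zset 0)) else ρ.rhs), []⟩ : ERule α) ∈
      unravelOpt (u ρ) ρ := by
    refine mem_unravelOpt.2 ⟨0, by omega, ?_⟩
    rw [if_pos rfl]
    rfl
  have h := hLL ρ hρ _ hmem
  exact h

/-- Root step with the rule of an unconditional `ρ ∈ R`. -/
theorem root_uncond (hsig : ∀ ρ ∈ R, ρ.overSig F)
    (hLL : ∀ ρ ∈ R, ∀ q ∈ unravelOpt (u ρ) ρ, q.LL) (hfresh : UFresh F u R)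
    {ρ : ERule α} (hρ : ρ ∈ R) (hk : ρ.conds.length = 0)
    {D : Set Pos} {σ : ℕ → Term α} {a : Term α}
    (hsim : Sim R u D (ρ.lhs.subst σ) a) :
    Sim R u (nextB D [] ρ.lhs ρ.rhs) (ρ.rhs.subst σ) a := by
  classical
  obtain ⟨μ, hredμ, hoccμ⟩ := ext_sim hfresh ρ.lhs (lhs_linear hLL hρ) (hsig ρ hρ).1 hsim
  set δ' : ℕ → Term α := fun x => if x ∈ ρ.lhs.varFinset then μ x else σ x with hδ'
  have hlhseq : ρ.lhs.subst δ' = ρ.lhs.subst μ :=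
    subst_congr (fun x hx => by rw [hδ']; exact if_pos hx)
  have hred : RedStar R a (ρ.rhs.subst δ') := by
    rw [← hlhseq] at hredμ
    refine hredμ.trans (Relation.ReflTransGen.single (red_of_conds hρ δ' ?_))
    intro c hc
    rw [List.length_eq_zero_iff] at hk
    rw [hk] at hc
    cases hc
  refine sim_precomp hred ?_
  refine plug_sim hfresh ρ.rhs (hsig ρ hρ).2.1 _ σ δ' ?_
  refine root_plug_hyp (lhs_linear hLL hρ) ?_ ?_
  · intro pv x hpv
    have hx : x ∈ ρ.lhs.varFinset := mem_varFinset_of_sub? hpv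
    have : δ' x = μ x := by rw [hδ']; exact if_pos hx
    rw [this]
    exact hoccμ pv x hpv
  · intro x _ hno
    have hx : x ∉ ρ.lhs.varFinset := by
      intro hmem
      rcases exists_pos_of_mem_varFinset hmem with ⟨pv, hpv⟩
      exact hno pv hpv
    rw [hδ']
    exact if_neg hx

/-- Root step with the first unraveled rule of a conditional `ρ ∈ R`. -/
theorem root_first (hsig : ∀ ρ ∈ R, ρ.overSig F)
    (hLL : ∀ ρ ∈ R, ∀ q ∈ unravelOpt (u ρ) ρ, q.LL) (hfresh : UFresh F u R)
    {ρ : ERule α} (hρ : ρ ∈ R) (hk : 0 < ρ.conds.length)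
    {D : Set Pos} {σ : ℕ → Term α} {a : Term α}
    (hsim : Sim R u D (ρ.lhs.subst σ) a) :
    Sim R u (nextB D [] ρ.lhs (mkU (u ρ 0) (sC ρ 0) (seqOf (ρ.Zset 0))))
      ((mkU (u ρ 0) (sC ρ 0) (seqOf (ρ.Zset 0))).subst σ) a := by
  classical
  obtain ⟨μ, hredμ, hoccμ⟩ := ext_sim hfresh ρ.lhs (lhs_linear hLL hρ) (hsig ρ hρ).1 hsim
  set δ' : ℕ → Term α := fun x => if x ∈ ρ.lhs.varFinset then μ x else σ x with hδ'
  have hlhseq : ρ.lhs.subst δ' = ρ.lhs.subst μ :=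
    subst_congr (fun x hx => by rw [hδ']; exact if_pos hx)
  have HYP := root_plug_hyp (D := D)
      (Rr := mkU (u ρ 0) (sC ρ 0) (seqOf (ρ.Zset 0))) (σ := σ) (δ' := δ')
      (lhs_linear hLL hρ)
      (fun pv x hpv => by
        have hx : x ∈ ρ.lhs.varFinset := mem_varFinset_of_sub? hpv
        have heq : δ' x = μ x := by rw [hδ']; exact if_pos hx
        rw [heq]
        exact hoccμ pv x hpv)
      (fun x _ hno => by
        have hx : x ∉ ρ.lhs.varFinset := by
          intro hmem
          rcases exists_pos_of_mem_varFinset hmem with ⟨pv, hpv⟩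
          exact hno pv hpv
        rw [hδ']
        exact if_neg hx)
  rw [subst_mkU]
  refine Sim.ublock _ ρ 0 _ _ a δ' hρ hk (by rw [List.length_map]) ?_ ?_ ?_ ?_
  · rw [← hlhseq] at hredμ
    exact hredμ
  · intro j hj
    exact absurd hj (Nat.not_lt_zero j)
  · refine plug_sim hfresh (sC ρ 0) (sC_overSig hsig hρ hk) _ σ δ' ?_
    intro p' x hp'
    have := HYP (0 :: p') x (by rw [sub?_mkU_zero]; exact hp')
    rwa [dnP_cons] at this
  · intro j x hx
    rw [List.getElem?_map] at hx
    cases hzs : (seqOf (ρ.Zset 0))[j]? with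
    | none => rw [hzs] at hx; cases hx
    | some z =>
        rw [hzs, Option.map_some] at hx
        cases hx
        have hz : (seqOf (ρ.Zset 0)).getD j 0 = z := by
          rw [List.getD_eq_getElem?_getD, hzs, Option.getD_some]
        rw [hz]
        have := HYP [j+1] z (by rw [sub?_mkU_succ, hzs]; rfl)
        rwa [dnP_singleton] at this

end Soundness
namespace Soundness

variable {α : Type u}
variable {F : Set α} {R : Set (ERule α)} {u : ERule α → ℕ → α}

/-- Root step with a middle or last unraveled rule of a conditional `ρ ∈ R`. -/
theorem root_mid_last (hsig : ∀ ρ ∈ R, ρ.overSig F) (hdet : ∀ ρ ∈ R, ρ.Det)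
    (hLL : ∀ ρ ∈ R, ∀ q ∈ unravelOpt (u ρ) ρ, q.LL) (hfresh : UFresh F u R)
    {ρ : ERule α} (hρ : ρ ∈ R) {j : ℕ} (hj : j < ρ.conds.length)
    {D : Set Pos} {σ : ℕ → Term α} {a : Term α} (hD : [] ∈ D)
    (hsim : Sim R u D ((mkU (u ρ j) (tC ρ j) (seqOf (ρ.Zset j))).subst σ) a) :
    Sim R u
      (nextB D [] (mkU (u ρ j) (tC ρ j) (seqOf (ρ.Zset j)))
        (if j + 1 < ρ.conds.length
          then mkU (u ρ (j+1)) (sC ρ (j+1)) (seqOf (ρ.Zset (j+1))) else ρ.rhs))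
      ((if j + 1 < ρ.conds.length
          then mkU (u ρ (j+1)) (sC ρ (j+1)) (seqOf (ρ.Zset (j+1))) else ρ.rhs).subst σ) a := by
  classical
  rw [subst_mkU] at hsim
  set L : Term α := mkU (u ρ j) (tC ρ j) (seqOf (ρ.Zset j)) with hL
  set Rr : Term α := if j + 1 < ρ.conds.length
      then mkU (u ρ (j+1)) (sC ρ (j+1)) (seqOf (ρ.Zset (j+1))) else ρ.rhs with hRr
  -- invert the simulation: it must be a `ublock`
  rcases sim_app_inv hsim with ⟨as, hside, _⟩ |
    ⟨ρ₀, i₀, w, vs, δ, hρ₀, hi₀, hfeq, hms, hlenv, hredδ, hconds, hw, hvs⟩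
  · exfalso
    rcases hside with hUS | hnil
    · exact hUS ⟨ρ, hρ, j, hj, rfl⟩
    · exact hnil hD
  obtain ⟨heq1, heq2⟩ := hfresh.2 ρ hρ ρ₀ hρ₀ j hj i₀ hi₀ hfeq
  subst heq1
  subst heq2
  injection hms with hms1 hms2
  subst hms1
  subst hms2
  -- extraction through the linear pattern `t_j`
  obtain ⟨μ, hredμ, hoccμ⟩ := ext_sim hfresh (tC ρ j) (tC_linear_and_disj hLL hρ hj).1
    (tC_overSig hsig hρ hj) hw
  set δ' : ℕ → Term α := fun x =>
    if x ∈ (tC ρ j).varFinset then μ x else if x ∈ ρ.Xset j then δ x else σ x with hδ'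
  have hXeq : ∀ x ∈ ρ.Xset j, δ' x = δ x := by
    intro x hx
    rw [hδ']
    simp only
    rw [if_neg (fun hc => tC_disj_Xset hLL hρ hj x hc hx), if_pos hx]
  have htCeq : ∀ x ∈ (tC ρ j).varFinset, δ' x = μ x := by
    intro x hx
    rw [hδ']
    simp only
    rw [if_pos hx]
  have hlhseq : ρ.lhs.subst δ' = ρ.lhs.subst δ :=
    subst_congr (fun x hx => hXeq x (lhs_sub_Xset ρ j hx))
  -- all conditions up to `j` hold with `δ'`
  have hcond' : ∀ jc < j + 1, RedStar R ((sC ρ jc).subst δ') ((tC ρ jc).subst δ') := by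
    intro jc hjc
    rcases Nat.lt_succ_iff_lt_or_eq.1 hjc with hlt | rfl
    · have h1 : (sC ρ jc).subst δ' = (sC ρ jc).subst δ :=
        subst_congr (fun x hx => hXeq x
          (Xset_mono (Nat.le_of_lt hlt) (sC_vars_sub hdet hρ (hlt.trans hj) hx)))
      have h2 : (tC ρ jc).subst δ' = (tC ρ jc).subst δ :=
        subst_congr (fun x hx => hXeq x
          (Xset_mono hlt (tC_vars_sub (hlt.trans hj) hx)))
      rw [h1, h2]
      exact hconds jc hlt
    · have h1 : (sC ρ jc).subst δ' = (sC ρ jc).subst δ :=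
        subst_congr (fun x hx => hXeq x (sC_vars_sub hdet hρ hj hx))
      have h2 : (tC ρ jc).subst δ' = (tC ρ jc).subst μ :=
        subst_congr (fun x hx => htCeq x hx)
      rw [h1, h2]
      exact hredμ
  -- occurrence read-backs through the whole left-hand side `L`
  have HOCC : ∀ (pv : Pos) (x : ℕ), Term.sub? pv L = some (.var x) →
      Sim R u (dnP D pv) (σ x) (δ' x) := by
    intro pv x hpv
    rcases occ_mkU_inv hpv with ⟨pv', rfl, hpv'⟩ | ⟨jz, rfl, hjz⟩
    · rw [htCeq x (mem_varFinset_of_sub? hpv'), dnP_cons]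
      exact hoccμ pv' x hpv'
    · have hxz : x ∈ seqOf (ρ.Zset j) := mem_of_getElem?' hjz
      have hxZ : x ∈ ρ.Zset j := mem_seqOf.1 hxz
      have hxnt : x ∉ (tC ρ j).varFinset :=
        fun hc => (tC_linear_and_disj hLL hρ hj).2 x hc hxz
      have hδx : δ' x = δ x := by
        rw [hδ']
        simp only
        rw [if_neg hxnt, if_pos (Zset_sub_Xset ρ j hxZ)]
      have hgd : (seqOf (ρ.Zset j)).getD jz 0 = x := by
        rw [List.getD_eq_getElem?_getD, hjz, Option.getD_some]
      have hvsx : ((seqOf (ρ.Zset j)).map σ)[jz]? = some (σ x) := by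
        rw [List.getElem?_map, hjz, Option.map_some]
      have := hvs jz (σ x) hvsx
      rw [hgd] at this
      rw [hδx, dnP_singleton]
      exact this
  -- default values for variables not occurring in `L`
  have HNONE : ∀ (x : ℕ), x ∈ Rr.varFinset →
      (∀ pv, Term.sub? pv L ≠ some (.var x)) → δ' x = σ x := by
    intro x hxR hno
    have hxnt : x ∉ (tC ρ j).varFinset := by
      intro hc
      rcases exists_pos_of_mem_varFinset hc with ⟨pv, hpv⟩
      exact hno (0 :: pv) (by rw [hL, sub?_mkU_zero]; exact hpv)
    have hxnz : x ∉ seqOf (ρ.Zset j) := by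
      intro hc
      rcases List.mem_iff_getElem.1 hc with ⟨jz, hjz, hz⟩
      refine hno [jz + 1] ?_
      rw [hL, sub?_mkU_succ, List.getElem?_eq_getElem hjz, hz, Option.map_some]
    have hxnX : x ∉ ρ.Xset j := by
      intro hX
      have hxZ : x ∈ ρ.Zset j := by
        by_cases hjk : j + 1 < ρ.conds.length
        · rw [hRr, if_pos hjk] at hxR
          rcases mem_varFinset_mkU.1 hxR with hxs | hxz
          · exact mem_Zset.2 ⟨hX, sC_sub_Yset (Nat.lt_succ_self j) hjk hxs⟩
          · have : x ∈ ρ.Zset (j+1) := mem_seqOf.1 hxz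
            exact mem_Zset.2 ⟨hX, Yset_succ_sub hjk (mem_Zset.1 this).2⟩
        · rw [hRr, if_neg hjk] at hxR
          exact mem_Zset.2 ⟨hX, rhs_sub_Yset ρ j hxR⟩
      exact hxnz (mem_seqOf.2 hxZ)
    rw [hδ']
    simp only
    rw [if_neg hxnt, if_neg hxnX]
  have HYP := root_plug_hyp (D := D) (Rr := Rr) (σ := σ) (δ' := δ')
    (mkU_linear hLL hρ hj) HOCC HNONE
  -- case split: middle rule or last rule
  by_cases hjk : j + 1 < ρ.conds.length
  · rw [hRr, if_pos hjk]
    rw [hRr, if_pos hjk] at HYP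
    rw [subst_mkU]
    refine Sim.ublock _ ρ (j+1) _ _ a δ' hρ hjk (by rw [List.length_map]) ?_ hcond' ?_ ?_
    · rw [← hlhseq] at hredδ
      exact hredδ
    · refine plug_sim hfresh (sC ρ (j+1)) (sC_overSig hsig hρ hjk) _ σ δ' ?_
      intro p' x hp'
      have := HYP (0 :: p') x (by rw [sub?_mkU_zero]; exact hp')
      rwa [dnP_cons] at this
    · intro jz x hx
      rw [List.getElem?_map] at hx
      cases hzs : (seqOf (ρ.Zset (j+1)))[jz]? with
      | none => rw [hzs] at hx; cases hx
      | some z =>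
          rw [hzs, Option.map_some] at hx
          cases hx
          have hz : (seqOf (ρ.Zset (j+1))).getD jz 0 = z := by
            rw [List.getD_eq_getElem?_getD, hzs, Option.getD_some]
          rw [hz]
          have := HYP [jz + 1] z (by rw [sub?_mkU_succ, hzs]; rfl)
          rwa [dnP_singleton] at this
  · rw [hRr, if_neg hjk]
    rw [hRr, if_neg hjk] at HYP
    have hk : ρ.conds.length = j + 1 := by omega
    have hred : RedStar R a (ρ.rhs.subst δ') := by
      rw [← hlhseq] at hredδ
      refine hredδ.trans (Relation.ReflTransGen.single (red_of_conds hρ δ' ?_))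
      intro c hc
      rcases List.mem_iff_getElem.1 hc with ⟨jc, hjc, rfl⟩
      have hsceq : sC ρ jc = ρ.conds[jc].1 := by
        rw [sC, List.getD_eq_getElem?_getD, List.getElem?_eq_getElem hjc, Option.getD_some]
      have htceq : tC ρ jc = ρ.conds[jc].2 := by
        rw [tC, List.getD_eq_getElem?_getD, List.getElem?_eq_getElem hjc, Option.getD_some]
      rw [← hsceq, ← htceq]
      exact hcond' jc (by omega)
    exact sim_precomp hred (plug_sim hfresh ρ.rhs (hsig ρ hρ).2.1 _ σ δ' HYP)

end Soundness
namespace Soundness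

variable {α : Type u}
variable {F : Set α} {R : Set (ERule α)} {u : ERule α → ℕ → α}

theorem mapIdx_ext {β γ : Type*} (l : List β) (f g : ℕ → β → γ)
    (h : ∀ i s, f i s = g i s) : l.mapIdx f = l.mapIdx g := by
  induction l generalizing f g with
  | nil => rfl
  | cons a l ih =>
      rw [List.mapIdx_cons, List.mapIdx_cons, h 0 a,
        ih (fun i => f (i+1)) (fun i => g (i+1)) (fun i s => h (i+1) s)]

theorem mapIdx_eq_self {β : Type*} (l : List β) (f : ℕ → β → β)
    (h : ∀ i s, f i s = s) : l.mapIdx f = l := by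
  induction l generalizing f with
  | nil => rfl
  | cons a l ih => rw [List.mapIdx_cons, h 0 a, ih _ (fun i s => h (i+1) s)]

theorem mapIdx_if_zero {β : Type*} (g : β → β) (w : β) (vs : List β) :
    (w :: vs).mapIdx (fun j s => if j = 0 then g s else s) = g w :: vs := by
  rw [List.mapIdx_cons, if_pos rfl]
  congr 1
  exact mapIdx_eq_self _ _ (fun i s => if_neg (Nat.succ_ne_zero i))

theorem mapIdx_if_succ {β : Type*} (g : β → β) (w : β) (vs : List β) (jz : ℕ) :
    (w :: vs).mapIdx (fun j s => if j = jz + 1 then g s else s) =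
      w :: vs.mapIdx (fun j s => if j = jz then g s else s) := by
  rw [List.mapIdx_cons, if_neg (Nat.succ_ne_zero jz).symm]
  congr 1
  exact mapIdx_ext _ _ _ (fun i s => if_congr (by omega) rfl rfl)

/-- A basic rewrite step of `U_opt(R)` preserves the simulation invariant. -/
theorem step_sim (hsig : ∀ ρ ∈ R, ρ.overSig F) (hdet : ∀ ρ ∈ R, ρ.Det)
    (hLL : ∀ ρ ∈ R, ∀ q ∈ unravelOpt (u ρ) ρ, q.LL) (hfresh : UFresh F u R) :
    ∀ (p : Pos) {D : Set Pos} {m a : Term α} {ρ q : ERule α} {σ : ℕ → Term α},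
    ρ ∈ R → q ∈ unravelOpt (u ρ) ρ →
    Term.sub? p m = some (q.lhs.subst σ) →
    p ∈ D → Sim R u D m a →
    Sim R u (nextB D p q.lhs q.rhs) (Term.replaceAt (q.rhs.subst σ) p m) a := by
  intro p
  induction p with
  | nil =>
      intro D m a ρ q σ hρ hq hsub hpD hsim
      rw [sub?_nil, Option.some.injEq] at hsub
      subst hsub
      rw [replaceAt_nil]
      obtain ⟨j, hjk, hqe⟩ := mem_unravelOpt.1 hq
      cases j with
      | zero =>
          rw [if_pos rfl] at hqe
          by_cases hk : 0 < ρ.conds.length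
          · rw [if_pos hk] at hqe
            subst hqe
            exact root_first hsig hLL hfresh hρ hk hsim
          · have hk0 : ρ.conds.length = 0 := by omega
            rw [if_neg hk] at hqe
            subst hqe
            exact root_uncond hsig hLL hfresh hρ hk0 hsim
      | succ j' =>
          subst hqe
          have hj' : j' < ρ.conds.length := by omega
          exact root_mid_last hsig hdet hLL hfresh hρ hj' hpD hsim
  | cons i p₀ ih =>
      intro D m a ρ q σ hρ hq hsub hpD hsim
      cases m with
      | var x => rw [sub?_cons_var] at hsub; cases hsub
      | app f ms =>
          rw [sub?_cons_app] at hsub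
          cases hms : ms[i]? with
          | none => rw [hms] at hsub; cases hsub
          | some mi =>
              rw [hms, Option.bind_some] at hsub
              rw [replaceAt_cons_app]
              rcases sim_app_inv hsim with ⟨as, hside, hred, hlen, hch⟩ |
                ⟨ρ₀, i₀, w, vs, δ, hρ₀, hi₀, rfl, rfl, hlenv, hredδ, hconds, hw, hvs⟩
              · refine Sim.node _ f _ as a ?_ hred
                  (by rw [List.length_mapIdx]; exact hlen) ?_
                · rcases hside with h | h
                  · exact Or.inl h
                  · exact Or.inr (nextB_nil_notmem h)
                · intro jj x y hx hy
                  rw [List.getElem?_mapIdx] at hx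
                  by_cases hji : jj = i
                  · subst hji
                    rw [hms, Option.map_some, if_pos rfl] at hx
                    cases hx
                    exact sim_antitone
                      (ih hρ hq hsub (show p₀ ∈ dn D jj from hpD) (hch jj mi y hms hy))
                      nextB_dn_eq
                  · cases hjj : ms[jj]? with
                    | none => rw [hjj] at hx; cases hx
                    | some s =>
                        rw [hjj, Option.map_some, if_neg hji] at hx
                        cases hx
                        exact sim_antitone (hch jj x y hjj hy) (nextB_dn_ne hji)
              · -- the surrounding symbol is a pending U-block
                cases i with
                | zero =>
                    rw [List.getElem?_cons_zero, Option.some.injEq] at hms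
                    subst hms
                    rw [mapIdx_if_zero]
                    refine Sim.ublock _ ρ₀ i₀ _ _ a δ hρ₀ hi₀ hlenv hredδ hconds ?_ ?_
                    · exact sim_antitone
                        (ih hρ hq hsub (show p₀ ∈ dn D 0 from hpD) hw) nextB_dn_eq
                    · intro jz x hx
                      exact sim_antitone (hvs jz x hx) (nextB_dn_ne (Nat.succ_ne_zero jz))
                | succ jz =>
                    rw [List.getElem?_cons_succ] at hms
                    rw [mapIdx_if_succ]
                    refine Sim.ublock _ ρ₀ i₀ _ _ a δ hρ₀ hi₀
                      (by rw [List.length_mapIdx]; exact hlenv) hredδ hconds ?_ ?_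
                    · exact sim_antitone hw (nextB_dn_ne (Nat.succ_ne_zero jz).symm)
                    · intro jj x hx
                      rw [List.getElem?_mapIdx] at hx
                      by_cases hji : jj = jz
                      · subst hji
                        rw [hms, Option.map_some, if_pos rfl] at hx
                        cases hx
                        exact sim_antitone
                          (ih hρ hq hsub (show p₀ ∈ dn D (jj+1) from hpD) (hvs jj mi hms))
                          (nextB_dn_eq (i := jj + 1))
                      · cases hjj : vs[jj]? with
                        | none => rw [hjj] at hx; cases hx
                        | some s =>
                            rw [hjj, Option.map_some, if_neg hji] at hx
                            cases hx
                            exact sim_antitone (hvs jj x hjj)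
                              (nextB_dn_ne (fun h => hji (Nat.succ_injective h)))

/-- Main induction along an EV-safe reduction sequence. -/
theorem master (hsig : ∀ ρ ∈ R, ρ.overSig F) (hdet : ∀ ρ ∈ R, ρ.Det)
    (hLL : ∀ ρ ∈ R, ∀ q ∈ unravelOpt (u ρ) ρ, q.LL) (hfresh : UFresh F u R) :
    ∀ {B : Set Pos} {m t : Term α},
    EVSeq (UoptSys u R) (fun _ => True) B m t →
    ∀ {a : Term α}, Sim R u B m a → t.overSig F → RedStar R a t := by
  intro B m t hev
  induction hev with
  | refl B t => exact fun hsim htF => sim_fin hfresh htF hsim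
  | step p ρq σ hmem hcnil hsub hseq hpB hT hrest ih =>
      intro a hsim htF
      rcases hmem with ⟨ρ, hρ, hqmem⟩
      subst hseq
      exact ih (step_sim hsig hdet hLL hfresh p hρ hqmem hsub hpB hsim) htF

end Soundness
/-- Let `R` be a `U_opt`-LL eDCTRS over a signature `F` that is
non-LV or non-RV. Then `U_opt` is sound for `R` w.r.t. EV-safe reduction: for all
terms `s, t ∈ T(F,V)`, if `s ↪*_{U_opt(R)} t` (an EV-safe reduction sequence of
`U_opt(R)`), then `s →*_R t`. -/
theorem uopt_sound_of_ultraLL_EVsafe {α : Type u} (F : Set α) (R : Set (ERule α))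
    (u : ERule α → ℕ → α)
    (hsig : ∀ ρ ∈ R, ρ.overSig F)
    (hdet : ∀ ρ ∈ R, ρ.Det)
    (hLL : ∀ ρ ∈ R, ∀ q ∈ unravelOpt (u ρ) ρ, q.LL)
    (hfresh : UFresh F u R)
    (hnv : (∀ ρ ∈ R, ρ.nonLV) ∨ (∀ ρ ∈ R, ρ.nonRV)) :
    ∀ s t : Term α, s.overSig F → t.overSig F →
      EVSafe (UoptSys u R) s t → RedStar R s t := by
  intro s t hsF htF hev
  exact Soundness.master hsig hdet hLL hfresh hev (Soundness.sim_refl_over hfresh hsF _) htF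
end
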